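/- arXiv:2106.05150 — 9 statements merged into one kernel-verified Lean document; each statement's English description precedes it below -/
import Mathlib

section
/- Fix β ∈ (0,1] and a matrix H ∈ ℝ^{n×h}. Define the sequence Z^{(1)} = H and Z^{(k+1)} = (1−β) Ŝ Z^{(k)} + β H. Then the linear system (I − (1−β) Ŝ) Z = β H has a unique solution Z^{(∞)}, and the sequence Z^{(k)} converges to Z^{(∞)} as k → ∞. -/
open Matrix Filter Topology

lemma sum_sq_mulVec_le {n : ℕ} (At : Matrix (Fin n) (Fin n) ℝ) (d : Fin n → ℝ)
    (hd : ∀ i, 0 < d i) (hAt : ∀ i j, 0 ≤ At i j)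
    (hsym : ∀ i j, At i j = At j i)
    (hrow : ∀ i, ∑ j, At i j = d i)
    (S : Matrix (Fin n) (Fin n) ℝ)
    (hS : ∀ i j, S i j = At i j / (Real.sqrt (d i) * Real.sqrt (d j)))
    (x : Fin n → ℝ) : ∑ i, (S.mulVec x i)^2 ≤ ∑ i, (x i)^2 := by
  set z : Fin n → ℝ := fun j => x j / Real.sqrt (d j) with hz
  have hsq : ∀ i, Real.sqrt (d i) ^ 2 = d i := fun i => Real.sq_sqrt (hd i).le
  have hsqpos : ∀ i, 0 < Real.sqrt (d i) := fun i => Real.sqrt_pos.2 (hd i)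
  have h1 : ∀ i, S.mulVec x i = (∑ j, At i j * z j) / Real.sqrt (d i) := by
    intro i
    simp only [Matrix.mulVec, dotProduct, hS, hz]
    rw [Finset.sum_div]
    apply Finset.sum_congr rfl
    intro j _
    field_simp
  have h2 : ∀ i, (S.mulVec x i)^2 ≤ ∑ j, At i j * (z j)^2 := by
    intro i
    rw [h1, div_pow, hsq]
    rw [div_le_iff₀ (hd i)]
    have cs : (∑ j, At i j * z j) ^ 2 ≤ (∑ j, Real.sqrt (At i j) ^ 2) * ∑ j, (Real.sqrt (At i j) * z j) ^ 2 := by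
      have := Finset.sum_mul_sq_le_sq_mul_sq Finset.univ (fun j => Real.sqrt (At i j))
        (fun j => Real.sqrt (At i j) * z j)
      calc (∑ j, At i j * z j) ^ 2
          = (∑ j, Real.sqrt (At i j) * (Real.sqrt (At i j) * z j)) ^ 2 := by
            congr 1; apply Finset.sum_congr rfl; intro j _
            rw [← mul_assoc, Real.mul_self_sqrt (hAt i j)]
        _ ≤ _ := this
    calc (∑ j, At i j * z j) ^ 2 ≤ (∑ j, Real.sqrt (At i j) ^ 2) * ∑ j, (Real.sqrt (At i j) * z j) ^ 2 := cs
      _ = (∑ j, At i j * (z j)^2) * d i := by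
          rw [← hrow i]
          have e1 : ∀ j : Fin n, Real.sqrt (At i j) ^ 2 = At i j := fun j => Real.sq_sqrt (hAt i j)
          have e2 : ∀ j : Fin n, (Real.sqrt (At i j) * z j) ^ 2 = At i j * (z j)^2 := by
            intro j; rw [mul_pow, e1]
          simp only [e1, e2]; ring
  calc ∑ i, (S.mulVec x i)^2 ≤ ∑ i, ∑ j, At i j * (z j)^2 :=
        Finset.sum_le_sum (fun i _ => h2 i)
    _ = ∑ j, (∑ i, At i j) * (z j)^2 := by rw [Finset.sum_comm]; simp [Finset.sum_mul]
    _ = ∑ j, (x j)^2 := by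
        apply Finset.sum_congr rfl
        intro j _
        have : ∑ i, At i j = d j := by
          rw [show (∑ i, At i j) = ∑ i, At j i from Finset.sum_congr rfl (fun i _ => hsym i j), hrow j]
        rw [this, hz]
        simp only [div_pow]
        rw [Real.sq_sqrt (hd j).le, mul_div_cancel₀ _ (hd j).ne']

/-- Fix β ∈ (0,1] and H ∈ ℝ^{n×h}.  With Ŝ = D̃^{-1/2} Ã D̃^{-1/2}
(where Ã = A + I, D̃ = D + I, D the degree matrix of a symmetric nonnegative A),
define Z^{(1)} = H and Z^{(k+1)} = (1−β) Ŝ Z^{(k)} + β H.  Then the linear system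
(I − (1−β) Ŝ) Z = β H has a unique solution Z^{(∞)} and Z^{(k)} → Z^{(∞)}. -/
theorem stmt_0 {n h : ℕ} (A : Matrix (Fin n) (Fin n) ℝ)
    (hA_symm : Aᵀ = A) (hA_nonneg : ∀ i j, 0 ≤ A i j)
    (β : ℝ) (hβ : β ∈ Set.Ioc (0 : ℝ) 1)
    (H : Matrix (Fin n) (Fin h) ℝ)
    (S : Matrix (Fin n) (Fin n) ℝ)
    (hS : S = Matrix.diagonal (fun i => 1 / Real.sqrt ((∑ j, A i j) + 1)) * (A + 1) *
      Matrix.diagonal (fun i => 1 / Real.sqrt ((∑ j, A i j) + 1)))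
    (Z : ℕ → Matrix (Fin n) (Fin h) ℝ)
    (hZ1 : Z 0 = H)
    (hZrec : ∀ k : ℕ, Z (k + 1) = (1 - β) • (S * Z k) + β • H) :
    ∃ Zinf : Matrix (Fin n) (Fin h) ℝ,
      (∀ W : Matrix (Fin n) (Fin h) ℝ,
        ((1 : Matrix (Fin n) (Fin n) ℝ) - (1 - β) • S) * W = β • H ↔ W = Zinf) ∧
      Tendsto Z atTop (𝓝 Zinf) := by
  obtain ⟨hβ0, hβ1⟩ := hβ
  set c : ℝ := 1 - β with hc
  have hc0 : 0 ≤ c := by simp [hc]; linarith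
  have hc1 : c < 1 := by simp [hc]; linarith
  -- setup for key lemma
  set d : Fin n → ℝ := fun i => (∑ j, A i j) + 1 with hd_def
  have hd : ∀ i, 0 < d i := by
    intro i
    have : 0 ≤ ∑ j, A i j := Finset.sum_nonneg (fun j _ => hA_nonneg i j)
    simp only [hd_def]; linarith
  set At : Matrix (Fin n) (Fin n) ℝ := A + 1 with hAt_def
  have hAt_apply : ∀ i j, At i j = A i j + (if i = j then (1:ℝ) else 0) := by
    intro i j; simp [hAt_def, Matrix.one_apply]
  have hAt : ∀ i j, 0 ≤ At i j := by
    intro i j; rw [hAt_apply]; have := hA_nonneg i j; split <;> linarith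
  have hsym : ∀ i j, At i j = At j i := by
    intro i j
    have hAij : A i j = A j i := by
      conv_lhs => rw [← hA_symm]
      rfl
    by_cases hij : i = j
    · subst hij; rfl
    · rw [hAt_apply, hAt_apply, hAij, if_neg hij, if_neg (Ne.symm hij)]
  have hrow : ∀ i, ∑ j, At i j = d i := by
    intro i
    simp only [hAt_apply, Finset.sum_add_distrib, Finset.sum_ite_eq, Finset.mem_univ,
      if_true, hd_def]
  have hS_apply : ∀ i j, S i j = At i j / (Real.sqrt (d i) * Real.sqrt (d j)) := by
    intro i j
    rw [hS, Matrix.mul_diagonal, Matrix.diagonal_mul]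
    simp only [hd_def]
    ring
  have key : ∀ x : Fin n → ℝ, ∑ i, (S.mulVec x i)^2 ≤ ∑ i, (x i)^2 :=
    sum_sq_mulVec_le At d hd hAt hsym hrow S hS_apply
  -- the matrix T
  set T : Matrix (Fin n) (Fin n) ℝ := (1 : Matrix (Fin n) (Fin n) ℝ) - c • S with hT
  have hdet : IsUnit T.det := by
    rw [isUnit_iff_ne_zero]
    intro h0
    obtain ⟨v, hv0, hv⟩ := (Matrix.exists_mulVec_eq_zero_iff).2 h0
    have hveq : v = c • S.mulVec v := by
      have : T.mulVec v = v - c • S.mulVec v := by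
        rw [hT, Matrix.sub_mulVec, Matrix.one_mulVec, Matrix.smul_mulVec]
      rw [this] at hv
      exact sub_eq_zero.1 hv
    have hsum : ∑ i, (v i)^2 ≤ c^2 * ∑ i, (v i)^2 := by
      calc ∑ i, (v i)^2 = ∑ i, (c • S.mulVec v) i ^ 2 := by rw [← hveq]
        _ = c^2 * ∑ i, (S.mulVec v i)^2 := by
            simp only [Pi.smul_apply, smul_eq_mul, mul_pow, Finset.mul_sum]
        _ ≤ c^2 * ∑ i, (v i)^2 := by
            apply mul_le_mul_of_nonneg_left (key v) (sq_nonneg c)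
    have hvsum0 : ∑ i, (v i)^2 ≤ 0 := by
      by_contra hpos
      push_neg at hpos
      have hc2 : c^2 < 1 := by nlinarith
      have := mul_lt_mul_of_pos_right hc2 hpos
      rw [one_mul] at this
      linarith
    apply hv0
    funext i
    have h1 : (v i)^2 ≤ 0 := by
      have := Finset.sum_nonneg (fun j (_ : j ∈ Finset.univ) => sq_nonneg (v j))
      have hle : (v i)^2 ≤ ∑ j, (v j)^2 :=
        Finset.single_le_sum (fun j _ => sq_nonneg (v j)) (Finset.mem_univ i)
      linarith
    have := sq_nonneg (v i)
    have : (v i)^2 = 0 := le_antisymm h1 this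
    exact pow_eq_zero_iff (by norm_num) |>.1 this
  set Zinf : Matrix (Fin n) (Fin h) ℝ := T⁻¹ * (β • H) with hZinf
  have hiff : ∀ W : Matrix (Fin n) (Fin h) ℝ, T * W = β • H ↔ W = Zinf := by
    intro W
    constructor
    · intro hW
      rw [hZinf, ← hW, ← Matrix.mul_assoc, Matrix.nonsing_inv_mul T hdet, Matrix.one_mul]
    · intro hW
      rw [hW, hZinf, ← Matrix.mul_assoc, Matrix.mul_nonsing_inv T hdet, Matrix.one_mul]
  have hfix : T * Zinf = β • H := (hiff Zinf).2 rfl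
  have hfix' : Zinf = c • (S * Zinf) + β • H := by
    have h2 : T * Zinf = Zinf - c • (S * Zinf) := by
      rw [hT, Matrix.sub_mul, Matrix.one_mul, Matrix.smul_mul]
    rw [h2] at hfix
    exact sub_eq_iff_eq_add'.1 hfix
  -- error sequence
  set E : ℕ → Matrix (Fin n) (Fin h) ℝ := fun k => Z k - Zinf with hE
  have hErec : ∀ k, E (k + 1) = c • (S * E k) := by
    intro k
    show Z (k+1) - Zinf = c • (S * (Z k - Zinf))
    rw [hZrec k, Matrix.mul_sub, smul_sub]
    nth_rewrite 1 [hfix']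
    abel
  -- squared Frobenius norm
  set N : Matrix (Fin n) (Fin h) ℝ → ℝ := fun M => ∑ i, ∑ j, (M i j)^2 with hNdef
  have hN_nonneg : ∀ M, 0 ≤ N M := by
    intro M
    apply Finset.sum_nonneg
    intro i _
    exact Finset.sum_nonneg (fun j _ => sq_nonneg _)
  have hN_mul : ∀ M, N (S * M) ≤ N M := by
    intro M
    have hcol : ∀ (t : Fin h) (i : Fin n), (S * M) i t = S.mulVec (fun j => M j t) i := by
      intro t i
      simp [Matrix.mul_apply, Matrix.mulVec, dotProduct]
    calc N (S * M) = ∑ t, ∑ i, ((S * M) i t)^2 := Finset.sum_comm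
      _ = ∑ t, ∑ i, (S.mulVec (fun j => M j t) i)^2 := by
          apply Finset.sum_congr rfl; intro t _
          apply Finset.sum_congr rfl; intro i _
          rw [hcol]
      _ ≤ ∑ t, ∑ i, (M i t)^2 := Finset.sum_le_sum (fun t _ => key _)
      _ = N M := Finset.sum_comm
  have hNE : ∀ k, N (E k) ≤ (c^2)^k * N (E 0) := by
    intro k
    induction k with
    | zero => simp
    | succ k ih =>
      have h1 : N (E (k+1)) = c^2 * N (S * E k) := by
        rw [hErec k, hNdef]
        simp only [Matrix.smul_apply, smul_eq_mul, mul_pow, Finset.mul_sum]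
      calc N (E (k+1)) = c^2 * N (S * E k) := h1
        _ ≤ c^2 * N (E k) := mul_le_mul_of_nonneg_left (hN_mul _) (sq_nonneg c)
        _ ≤ c^2 * ((c^2)^k * N (E 0)) := mul_le_mul_of_nonneg_left ih (sq_nonneg c)
        _ = (c^2)^(k+1) * N (E 0) := by ring
  -- entrywise convergence
  have hEtend : ∀ i j, Tendsto (fun k => E k i j) atTop (𝓝 0) := by
    intro i j
    apply squeeze_zero_norm (a := fun k => c^k * Real.sqrt (N (E 0)))
    · intro k
      have h1 : (E k i j)^2 ≤ (c^2)^k * N (E 0) := by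
        have hle1 : (E k i j)^2 ≤ ∑ t, (E k i t)^2 :=
          Finset.single_le_sum (f := fun t => (E k i t)^2)
            (fun t _ => sq_nonneg _) (Finset.mem_univ j)
        have hle2 : (∑ t, (E k i t)^2) ≤ N (E k) :=
          Finset.single_le_sum (f := fun s => ∑ t, (E k s t)^2)
            (fun s _ => Finset.sum_nonneg fun t _ => sq_nonneg _) (Finset.mem_univ i)
        exact (hle1.trans hle2).trans (hNE k)
      have h2 : |E k i j| ≤ Real.sqrt ((c^2)^k * N (E 0)) := by
        rw [← Real.sqrt_sq_eq_abs]
        exact Real.sqrt_le_sqrt h1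
      calc ‖E k i j‖ = |E k i j| := rfl
        _ ≤ Real.sqrt ((c^2)^k * N (E 0)) := h2
        _ = c^k * Real.sqrt (N (E 0)) := by
            rw [show ((c^2)^k : ℝ) = (c^k)^2 by rw [← pow_mul, mul_comm 2 k, pow_mul],
              Real.sqrt_mul (sq_nonneg _), Real.sqrt_sq (pow_nonneg hc0 k)]
    · simpa using (tendsto_pow_atTop_nhds_zero_of_lt_one hc0 hc1).mul_const
        (Real.sqrt (N (E 0)))
  refine ⟨Zinf, hiff, ?_⟩
  have hZtend : ∀ i j, Tendsto (fun k => Z k i j) atTop (𝓝 (Zinf i j)) := by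
    intro i j
    have h3 := hEtend i j
    simp only [hE, Matrix.sub_apply] at h3
    exact tendsto_sub_nhds_zero_iff.1 h3
  apply tendsto_pi_nhds.2
  intro i
  apply tendsto_pi_nhds.2
  intro j
  exact hZtend i j
end

section
/- Fix β ∈ (0,1] and H ∈ ℝ^{n×h}, and consider the convex quadratic objective F(Y) = (1−β) Tr(Yᵀ L Y) + β ‖D̃^{1/2} Y − H‖_F² over Y ∈ ℝ^{n×h}. If Y* is a minimizer of F, then Z* = D̃^{1/2} Y* satisfies (I − (1−β) Ŝ) Z* = β H, and Z* is the unique solution of this linear system. -/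
open Matrix


-- quadratic trick: if 0 ≤ a t² + b t for all t, and 0 ≤ b, then b = 0
lemma aux_quad (a b : ℝ) (hge : ∀ t : ℝ, 0 ≤ a * t^2 + b * t) (hb : 0 ≤ b) : b = 0 := by
  by_contra hne
  have hbpos : 0 < b := lt_of_le_of_ne hb (Ne.symm hne)
  have h1 := hge (-1)
  have ha : 0 < a := by nlinarith
  have h2 := hge (-(b/(2*a)))
  have heq : a * (-(b/(2*a)))^2 + b * (-(b/(2*a))) = -(b^2/(4*a)) := by
    field_simp; ring
  rw [heq] at h2
  have hlt : -(b^2/(4*a)) < 0 := by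
    have : 0 < b^2/(4*a) := div_pos (by positivity) (by linarith)
    linarith
  linarith

-- trace of GᵀG is a sum of squares
lemma aux_trace_sq {n h : ℕ} (G : Matrix (Fin n) (Fin h) ℝ) :
    Matrix.trace (Gᵀ * G) = ∑ j, ∑ i, (G i j)^2 := by
  simp [Matrix.trace, Matrix.mul_apply, Matrix.diag, sq]

lemma aux_trace_sq_zero {n h : ℕ} (G : Matrix (Fin n) (Fin h) ℝ)
    (hz : Matrix.trace (Gᵀ * G) = 0) : G = 0 := by
  rw [aux_trace_sq] at hz
  ext i j
  have h1 : ∀ j ∈ Finset.univ, (0:ℝ) ≤ ∑ i, (G i j)^2 := by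
    intro j _; positivity
  have h2 := (Finset.sum_eq_zero_iff_of_nonneg h1).mp hz j (Finset.mem_univ j)
  have h3 : ∀ i ∈ Finset.univ, (0:ℝ) ≤ (G i j)^2 := by intro i _; positivity
  have h4 := (Finset.sum_eq_zero_iff_of_nonneg h3).mp h2 i (Finset.mem_univ i)
  simpa using pow_eq_zero_iff (n := 2) (by norm_num) |>.mp h4

lemma aux_trace_comm {n h : ℕ} (M : Matrix (Fin n) (Fin n) ℝ) (hM : Mᵀ = M)
    (Y V : Matrix (Fin n) (Fin h) ℝ) :
    Matrix.trace (Yᵀ * (M * V)) = Matrix.trace (Vᵀ * (M * Y)) := by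
  rw [← Matrix.trace_transpose (Yᵀ * (M * V))]
  simp [Matrix.transpose_mul, hM, Matrix.mul_assoc]

lemma aux_quad_expand {n h : ℕ} (M : Matrix (Fin n) (Fin n) ℝ) (hM : Mᵀ = M)
    (Y V : Matrix (Fin n) (Fin h) ℝ) (t : ℝ) :
    Matrix.trace ((Y + t • V)ᵀ * (M * (Y + t • V))) =
      Matrix.trace (Yᵀ * (M * Y)) + 2 * t * Matrix.trace (Vᵀ * (M * Y))
        + t^2 * Matrix.trace (Vᵀ * (M * V)) := by
  have key := aux_trace_comm M hM Y V
  simp only [Matrix.transpose_add, Matrix.transpose_smul, Matrix.add_mul, Matrix.mul_add,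
    Matrix.smul_mul, Matrix.mul_smul, Matrix.trace_add, Matrix.trace_smul, smul_eq_mul, key]
  ring


lemma aux_lap {n : ℕ} (A : Matrix (Fin n) (Fin n) ℝ) (hA_symm : Aᵀ = A) (x : Fin n → ℝ) :
    2 * (∑ i, x i * ((∑ j, A i j) * x i - ∑ k, A i k * x k))
      = ∑ i, ∑ k, A i k * (x i - x k)^2 := by
  have hAs : ∀ i j, A j i = A i j := by
    intro i j
    simpa [Matrix.transpose_apply] using congrFun (congrFun hA_symm i) j
  have e1 : ∑ i, x i * ((∑ j, A i j) * x i - ∑ k, A i k * x k)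
      = ∑ i, ∑ k, (A i k * x i^2 - A i k * (x i * x k)) := by
    refine Finset.sum_congr rfl fun i _ => ?_
    rw [Finset.sum_sub_distrib, mul_sub, Finset.mul_sum]
    congr 1
    · rw [show x i * ((∑ j, A i j) * x i) = (∑ j, A i j) * x i^2 by ring, Finset.sum_mul]
    · exact Finset.sum_congr rfl fun k _ => by ring
  have e2 : ∑ i, ∑ k, A i k * (x i - x k)^2
      = ∑ i, ∑ k, (A i k * x i^2 + A i k * x k^2 - 2 * (A i k * (x i * x k))) := by
    refine Finset.sum_congr rfl fun i _ => Finset.sum_congr rfl fun k _ => by ring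
  have e3 : ∑ i, ∑ k, A i k * x k^2 = ∑ i, ∑ k, A i k * x i^2 := by
    rw [Finset.sum_comm]
    exact Finset.sum_congr rfl fun i _ => Finset.sum_congr rfl fun k _ => by rw [hAs]
  have e4 : (∑ i, ∑ k, 2 * (A i k * (x i * x k)))
      = 2 * ∑ i, ∑ k, A i k * (x i * x k) := by
    simp [Finset.mul_sum]
  rw [e1, e2]
  simp only [Finset.sum_add_distrib, Finset.sum_sub_distrib]
  rw [e3, e4]
  ring

lemma aux_ker {n h : ℕ} (A : Matrix (Fin n) (Fin n) ℝ) (hA_symm : Aᵀ = A)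
    (hA_nonneg : ∀ i j, 0 ≤ A i j) (β : ℝ) (hβ0 : 0 < β) (hβ1 : β ≤ 1)
    (M : Matrix (Fin n) (Fin n) ℝ)
    (hM : M = (1-β) • (Matrix.diagonal (fun i => ∑ j, A i j) - A)
        + β • Matrix.diagonal (fun i => (∑ j, A i j) + 1))
    (W : Matrix (Fin n) (Fin h) ℝ) (hW : M * W = 0) : W = 0 := by
  have hd : ∀ i, (0:ℝ) < (∑ j, A i j) + 1 := by
    intro i
    have := Finset.sum_nonneg (fun j (_ : j ∈ Finset.univ) => hA_nonneg i j)
    linarith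
  have hMe : ∀ i k, M i k = (1-β) * ((if i = k then (∑ j, A i j) else 0) - A i k)
      + β * (if i = k then (∑ j, A i j) + 1 else 0) := by
    intro i k
    simp [hM, Matrix.diagonal_apply]
  have key : ∀ c i, W i c = 0 := by
    intro c
    have hrow : ∀ i, (1-β) * ((∑ j, A i j) * W i c - ∑ k, A i k * W k c)
        + β * (((∑ j, A i j) + 1) * W i c) = 0 := by
      intro i
      have h0 : (M * W) i c = 0 := by rw [hW]; rfl
      rw [Matrix.mul_apply] at h0
      have h1 : ∑ k, (if i = k then (∑ j, A i j) else 0) * W k c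
          = (∑ j, A i j) * W i c := by simp
      have h2 : ∑ k, (if i = k then (∑ j, A i j) + 1 else 0) * W k c
          = ((∑ j, A i j) + 1) * W i c := by simp
      have h3 : ∑ k, M i k * W k c
          = (1-β) * (∑ k, (if i = k then (∑ j, A i j) else 0) * W k c
              - ∑ k, A i k * W k c)
            + β * ∑ k, (if i = k then (∑ j, A i j) + 1 else 0) * W k c := by
        rw [← Finset.sum_sub_distrib, Finset.mul_sum, Finset.mul_sum,
          ← Finset.sum_add_distrib]
        exact Finset.sum_congr rfl fun k _ => by rw [hMe i k]; ring
      rw [h3, h1, h2] at h0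
      exact h0
    have hq : ∑ i, W i c * ((1-β) * ((∑ j, A i j) * W i c - ∑ k, A i k * W k c)
        + β * (((∑ j, A i j) + 1) * W i c)) = 0 := by
      simp only [hrow, mul_zero, Finset.sum_const_zero]
    have hsplit : ∑ i, W i c * ((1-β) * ((∑ j, A i j) * W i c - ∑ k, A i k * W k c)
        + β * (((∑ j, A i j) + 1) * W i c))
        = (1-β) * (∑ i, W i c * ((∑ j, A i j) * W i c - ∑ k, A i k * W k c))
          + β * (∑ i, ((∑ j, A i j) + 1) * W i c ^ 2) := by
      rw [Finset.mul_sum, Finset.mul_sum, ← Finset.sum_add_distrib]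
      exact Finset.sum_congr rfl fun i _ => by ring
    rw [hsplit] at hq
    have hqL : 0 ≤ ∑ i, W i c * ((∑ j, A i j) * W i c - ∑ k, A i k * W k c) := by
      have hid := aux_lap A hA_symm (fun i => W i c)
      have hnn : 0 ≤ ∑ i, ∑ k, A i k * ((W i c) - (W k c))^2 :=
        Finset.sum_nonneg fun i _ => Finset.sum_nonneg fun k _ =>
          mul_nonneg (hA_nonneg i k) (sq_nonneg _)
      linarith
    have hqDnn : ∀ i ∈ Finset.univ, (0:ℝ) ≤ ((∑ j, A i j) + 1) * W i c ^ 2 :=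
      fun i _ => mul_nonneg (le_of_lt (hd i)) (sq_nonneg _)
    have hqD0 : ∑ i, ((∑ j, A i j) + 1) * W i c ^ 2 = 0 := by
      have h5 : 0 ≤ ∑ i, ((∑ j, A i j) + 1) * W i c ^ 2 := Finset.sum_nonneg hqDnn
      nlinarith [mul_nonneg (sub_nonneg.mpr hβ1) hqL]
    intro i
    have := (Finset.sum_eq_zero_iff_of_nonneg hqDnn).mp hqD0 i (Finset.mem_univ i)
    have hsq : W i c ^ 2 = 0 := by
      rcases mul_eq_zero.mp this with h | h
      · exact absurd h (ne_of_gt (hd i))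
      · exact h
    exact pow_eq_zero_iff (by norm_num) |>.mp hsq
  ext i c
  simp [key c i]

/-- Fix β ∈ (0,1] and H ∈ ℝ^{n×h}.  Consider
F(Y) = (1−β) Tr(Yᵀ L Y) + β ‖D̃^{1/2} Y − H‖_F² over Y ∈ ℝ^{n×h}, where L = D − A
is the Laplacian, D̃ = D + I and Ŝ = D̃^{-1/2} Ã D̃^{-1/2}.  If Y* minimizes F, then
Z* = D̃^{1/2} Y* satisfies (I − (1−β) Ŝ) Z* = β H, and Z* is the unique solution of
this linear system. -/
theorem stmt_2 {n h : ℕ} (A : Matrix (Fin n) (Fin n) ℝ)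
    (hA_symm : Aᵀ = A) (hA_nonneg : ∀ i j, 0 ≤ A i j)
    (β : ℝ) (hβ : β ∈ Set.Ioc (0 : ℝ) 1)
    (H : Matrix (Fin n) (Fin h) ℝ)
    (L : Matrix (Fin n) (Fin n) ℝ)
    (hL : L = Matrix.diagonal (fun i => ∑ j, A i j) - A)
    (Dtsqrt : Matrix (Fin n) (Fin n) ℝ)
    (hDtsqrt : Dtsqrt = Matrix.diagonal (fun i => Real.sqrt ((∑ j, A i j) + 1)))
    (S : Matrix (Fin n) (Fin n) ℝ)
    (hS : S = Matrix.diagonal (fun i => 1 / Real.sqrt ((∑ j, A i j) + 1)) * (A + 1) *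
      Matrix.diagonal (fun i => 1 / Real.sqrt ((∑ j, A i j) + 1)))
    (F : Matrix (Fin n) (Fin h) ℝ → ℝ)
    (hF : ∀ Y : Matrix (Fin n) (Fin h) ℝ,
      F Y = (1 - β) * Matrix.trace (Yᵀ * L * Y) +
        β * Matrix.trace ((Dtsqrt * Y - H)ᵀ * (Dtsqrt * Y - H)))
    (Ystar : Matrix (Fin n) (Fin h) ℝ)
    (hYstar : ∀ Y : Matrix (Fin n) (Fin h) ℝ, F Ystar ≤ F Y) :
    ((1 : Matrix (Fin n) (Fin n) ℝ) - (1 - β) • S) * (Dtsqrt * Ystar) = β • H ∧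
    ∀ Z : Matrix (Fin n) (Fin h) ℝ,
      ((1 : Matrix (Fin n) (Fin n) ℝ) - (1 - β) • S) * Z = β • H → Z = Dtsqrt * Ystar := by
  obtain ⟨hβ0, hβ1⟩ := hβ
  set Dt : Matrix (Fin n) (Fin n) ℝ := Matrix.diagonal (fun i => (∑ j, A i j) + 1) with hDt
  set M : Matrix (Fin n) (Fin n) ℝ := (1-β) • L + β • Dt with hMdef
  set Dinv : Matrix (Fin n) (Fin n) ℝ :=
    Matrix.diagonal (fun i => 1 / Real.sqrt ((∑ j, A i j) + 1)) with hDinv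
  have hdpos : ∀ i, (0:ℝ) < (∑ j, A i j) + 1 := by
    intro i
    have := Finset.sum_nonneg (fun j (_ : j ∈ Finset.univ) => hA_nonneg i j)
    linarith
  have hsp : ∀ i, 0 < Real.sqrt ((∑ j, A i j) + 1) := fun i => Real.sqrt_pos.mpr (hdpos i)
  have hDtsq : Dtsqrt * Dtsqrt = Dt := by
    rw [hDtsqrt, hDt, Matrix.diagonal_mul_diagonal]
    have : (fun i => Real.sqrt ((∑ j, A i j) + 1) * Real.sqrt ((∑ j, A i j) + 1))
        = fun i => (∑ j, A i j) + 1 :=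
      funext fun i => Real.mul_self_sqrt (le_of_lt (hdpos i))
    rw [this]
  have hID : Dinv * Dtsqrt = 1 := by
    rw [hDinv, hDtsqrt, Matrix.diagonal_mul_diagonal]
    have : (fun i => 1 / Real.sqrt ((∑ j, A i j) + 1) * Real.sqrt ((∑ j, A i j) + 1))
        = fun _ => (1:ℝ) := funext fun i => by
      rw [one_div, inv_mul_cancel₀ (ne_of_gt (hsp i))]
    rw [this, Matrix.diagonal_one]
  have hDI : Dtsqrt * Dinv = 1 := by
    rw [hDinv, hDtsqrt, Matrix.diagonal_mul_diagonal]
    have : (fun i => Real.sqrt ((∑ j, A i j) + 1) * (1 / Real.sqrt ((∑ j, A i j) + 1)))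
        = fun _ => (1:ℝ) := funext fun i => by
      rw [one_div, mul_inv_cancel₀ (ne_of_gt (hsp i))]
    rw [this, Matrix.diagonal_one]
  have hMsym : Mᵀ = M := by
    rw [hMdef, hL, hDt]
    simp [Matrix.transpose_smul, Matrix.transpose_sub, Matrix.diagonal_transpose, hA_symm]
  have hdiagsplit : Matrix.diagonal (fun i => (∑ j, A i j) + 1)
      = Matrix.diagonal (fun i => ∑ j, A i j) + 1 := by
    ext i k
    by_cases hik : i = k <;> simp [Matrix.diagonal_apply, Matrix.one_apply, hik]
  have hMalt : M = Dt - (1-β) • (A + 1) := by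
    rw [hMdef, hL, hDt, hdiagsplit]
    module
  have hDtD : Dinv * Dt * Dinv = 1 := by
    rw [← hDtsq, ← Matrix.mul_assoc Dinv Dtsqrt Dtsqrt, Matrix.mul_assoc (Dinv * Dtsqrt),
      hID, hDI, Matrix.one_mul]
  have hSid : (1 : Matrix (Fin n) (Fin n) ℝ) - (1-β) • S = Dinv * M * Dinv := by
    rw [hMalt, Matrix.mul_sub, Matrix.sub_mul, Matrix.mul_smul, Matrix.smul_mul]
    rw [hDtD, hS]
  have hTsym : Dtsqrtᵀ = Dtsqrt := by rw [hDtsqrt]; exact Matrix.diagonal_transpose _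
  have hF2 : ∀ Y, F Y = Matrix.trace (Yᵀ * (M * Y))
      - (2*β) * Matrix.trace ((Dtsqrt * H)ᵀ * Y) + β * Matrix.trace (Hᵀ * H) := by
    intro Y
    rw [hF]
    have t1 : Matrix.trace (Yᵀ * Dtsqrt * (Dtsqrt * Y)) = Matrix.trace (Yᵀ * (Dt * Y)) := by
      rw [← hDtsq]
      simp [Matrix.mul_assoc]
    have t2 : Matrix.trace (Yᵀ * Dtsqrt * H) = Matrix.trace ((Dtsqrt * H)ᵀ * Y) := by
      rw [← Matrix.trace_transpose (Yᵀ * Dtsqrt * H)]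
      simp [Matrix.transpose_mul, hTsym, Matrix.mul_assoc]
    have t3 : Matrix.trace (Hᵀ * (Dtsqrt * Y)) = Matrix.trace ((Dtsqrt * H)ᵀ * Y) := by
      simp [Matrix.transpose_mul, hTsym, Matrix.mul_assoc]
    have hexp : Matrix.trace ((Dtsqrt * Y - H)ᵀ * (Dtsqrt * Y - H))
        = Matrix.trace (Yᵀ * (Dt * Y)) - 2 * Matrix.trace ((Dtsqrt * H)ᵀ * Y)
          + Matrix.trace (Hᵀ * H) := by
      rw [Matrix.transpose_sub, Matrix.sub_mul, Matrix.mul_sub, Matrix.mul_sub,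
        Matrix.transpose_mul, hTsym, Matrix.trace_sub, Matrix.trace_sub, Matrix.trace_sub,
        t1, t2, t3]
      ring
    have hexp2 : Matrix.trace (Yᵀ * (M * Y))
        = (1-β) * Matrix.trace (Yᵀ * L * Y) + β * Matrix.trace (Yᵀ * (Dt * Y)) := by
      rw [hMdef]
      simp [Matrix.add_mul, Matrix.smul_mul, Matrix.mul_add, Matrix.mul_smul,
        Matrix.trace_add, Matrix.trace_smul, Matrix.mul_assoc]
    rw [hexp, hexp2]
    ring
  set G : Matrix (Fin n) (Fin h) ℝ := M * Ystar - β • (Dtsqrt * H) with hG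
  have hkey : Matrix.trace (Gᵀ * (M * Ystar)) - β * Matrix.trace ((Dtsqrt * H)ᵀ * G)
      = Matrix.trace (Gᵀ * G) := by
    have e : Matrix.trace ((Dtsqrt * H)ᵀ * G) = Matrix.trace (Gᵀ * (Dtsqrt * H)) := by
      rw [← Matrix.trace_transpose ((Dtsqrt * H)ᵀ * G)]
      simp [Matrix.transpose_mul]
    rw [e]
    nth_rewrite 3 [hG]
    rw [Matrix.mul_sub, Matrix.mul_smul, Matrix.trace_sub, Matrix.trace_smul, smul_eq_mul]
  have htr0 : Matrix.trace (Gᵀ * G) = 0 := by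
    have hb : 0 ≤ Matrix.trace (Gᵀ * G) := by rw [aux_trace_sq]; positivity
    have hge : ∀ t : ℝ, 0 ≤ Matrix.trace (Gᵀ * (M * G)) * t^2
        + (2 * Matrix.trace (Gᵀ * G)) * t := by
      intro t
      have h6 := hYstar (Ystar + t • G)
      rw [hF2, hF2, aux_quad_expand M hMsym Ystar G t] at h6
      have hlin : Matrix.trace ((Dtsqrt * H)ᵀ * (Ystar + t • G))
          = Matrix.trace ((Dtsqrt * H)ᵀ * Ystar) + t * Matrix.trace ((Dtsqrt * H)ᵀ * G) := by
        rw [Matrix.mul_add, Matrix.mul_smul, Matrix.trace_add, Matrix.trace_smul, smul_eq_mul]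
      rw [hlin] at h6
      rw [← hkey]
      nlinarith [h6]
    have h20 := aux_quad _ _ hge (by linarith)
    linarith
  have hfoc : M * Ystar = β • (Dtsqrt * H) := by
    have h21 : G = 0 := aux_trace_sq_zero G htr0
    rw [hG] at h21
    exact sub_eq_zero.mp h21
  have hpart1 : ((1 : Matrix (Fin n) (Fin n) ℝ) - (1 - β) • S) * (Dtsqrt * Ystar) = β • H := by
    rw [hSid]
    calc Dinv * M * Dinv * (Dtsqrt * Ystar)
        = Dinv * (M * ((Dinv * Dtsqrt) * Ystar)) := by
          simp only [Matrix.mul_assoc]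
      _ = Dinv * (M * Ystar) := by rw [hID, Matrix.one_mul]
      _ = β • ((Dinv * Dtsqrt) * H) := by
          rw [hfoc, Matrix.mul_smul, ← Matrix.mul_assoc]
      _ = β • H := by rw [hID, Matrix.one_mul]
  refine ⟨hpart1, ?_⟩
  intro Z hZ
  have hMform : M = (1-β) • (Matrix.diagonal (fun i => ∑ j, A i j) - A)
      + β • Matrix.diagonal (fun i => (∑ j, A i j) + 1) := by
    rw [hMdef, hL, hDt]
  have hdiff : (Dinv * M * Dinv) * (Z - Dtsqrt * Ystar) = 0 := by
    rw [Matrix.mul_sub, ← hSid, hZ, hpart1, sub_self]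
  have hker_in : M * (Dinv * (Z - Dtsqrt * Ystar)) = 0 := by
    have h7 := congrArg (fun X => Dtsqrt * X) hdiff
    simp only [Matrix.mul_zero] at h7
    calc M * (Dinv * (Z - Dtsqrt * Ystar))
        = (Dtsqrt * Dinv) * (M * (Dinv * (Z - Dtsqrt * Ystar))) := by rw [hDI, Matrix.one_mul]
      _ = Dtsqrt * (Dinv * M * Dinv * (Z - Dtsqrt * Ystar)) := by
          simp only [Matrix.mul_assoc]
      _ = 0 := by rw [hdiff, Matrix.mul_zero]
  have h8 : Dinv * (Z - Dtsqrt * Ystar) = 0 :=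
    aux_ker A hA_symm hA_nonneg β hβ0 hβ1 M hMform _ hker_in
  have h9 : Z - Dtsqrt * Ystar = 0 := by
    have h10 := congrArg (fun X => Dtsqrt * X) h8
    simp only [Matrix.mul_zero] at h10
    calc Z - Dtsqrt * Ystar = (Dtsqrt * Dinv) * (Z - Dtsqrt * Ystar) := by rw [hDI, Matrix.one_mul]
      _ = Dtsqrt * (Dinv * (Z - Dtsqrt * Ystar)) := by rw [Matrix.mul_assoc]
      _ = 0 := by rw [h8, Matrix.mul_zero]
  exact sub_eq_zero.mp h9
end

section
/- Fix β ∈ (0,1], H ∈ ℝ^{n×h}, and V ∈ ℝ^{n×k} with orthonormal columns (Vᵀ V = I_k). Consider the reduced objective G(R) = (1−β) Tr(Rᵀ (Vᵀ L V) R) + β ‖D̃^{1/2} V R − H‖_F² over R ∈ ℝ^{k×h}. If R* is a minimizer of G, then Z* = D̃_V^{1/2} R* is the unique solution of the linear system (I − (1−β) D̃_V^{-1/2} Ã_V D̃_V^{-1/2}) Z = β D̃_V^{-1/2} Vᵀ D̃^{1/2} H, where Ã_V = Vᵀ Ã V and D̃_V = Vᵀ D̃ V. -/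
open Matrix

private lemma my_quad_zero (a b : ℝ) (h : ∀ t : ℝ, 0 ≤ a*t^2 + b*t) : b = 0 := by
  by_contra hb
  have ha : 0 < a := by
    rcases lt_or_gt_of_ne hb with h' | h'
    · nlinarith [h 1]
    · nlinarith [h (-1)]
  have h3 := h (-(b/(2*a)))
  have he : a * (-(b/(2*a)))^2 + b * (-(b/(2*a))) = -(b^2/(4*a)) := by field_simp; ring
  rw [he] at h3
  nlinarith [div_pos (by positivity : (0:ℝ) < b^2) (by linarith : (0:ℝ) < 4*a)]

private lemma my_trace_zero {k h : ℕ} (P : Matrix (Fin k) (Fin h) ℝ)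
    (hP : Matrix.trace (Pᵀ * P) = 0) : P = 0 := by
  have h1 : Matrix.trace (Pᵀ * P) = ∑ j, ∑ i, (P i j)^2 := by
    simp [Matrix.trace, Matrix.mul_apply, Matrix.diag, sq]
  rw [h1] at hP
  ext i j
  have h2 : ∀ j ∈ Finset.univ, (0:ℝ) ≤ ∑ i, (P i j)^2 :=
    fun j _ => Finset.sum_nonneg fun i _ => sq_nonneg _
  have h3 := (Finset.sum_eq_zero_iff_of_nonneg h2).mp hP j (Finset.mem_univ j)
  have h4 := (Finset.sum_eq_zero_iff_of_nonneg (fun i _ => sq_nonneg (P i j))).mp h3 i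
    (Finset.mem_univ i)
  simpa using pow_eq_zero_iff (n := 2) (by norm_num) |>.mp h4

private lemma my_psd_smul {k : ℕ} {X : Matrix (Fin k) (Fin k) ℝ} (hX : X.PosSemidef)
    {c : ℝ} (hc : 0 ≤ c) : (c • X).PosSemidef := by
  refine posSemidef_iff_dotProduct_mulVec.mpr ⟨?_, fun x => ?_⟩
  · unfold Matrix.IsHermitian
    rw [conjTranspose_smul]
    simp [starRingEnd_apply]; exact congrArg (c • ·) hX.1
  · rw [Matrix.smul_mulVec, dotProduct_smul, smul_eq_mul]
    exact mul_nonneg hc (hX.dotProduct_mulVec_nonneg x)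

private lemma my_pd_smul {k : ℕ} {X : Matrix (Fin k) (Fin k) ℝ} (hX : X.PosDef)
    {c : ℝ} (hc : 0 < c) : (c • X).PosDef := by
  refine posDef_iff_dotProduct_mulVec.mpr ⟨?_, fun x hx => ?_⟩
  · unfold Matrix.IsHermitian
    rw [conjTranspose_smul]
    simp [starRingEnd_apply]; exact congrArg (c • ·) hX.1
  rw [Matrix.smul_mulVec, dotProduct_smul, smul_eq_mul]
  exact mul_pos hc (hX.dotProduct_mulVec_pos hx)

private lemma my_pd_conj {n k : ℕ} {Dt : Matrix (Fin n) (Fin n) ℝ} (hDt : Dt.PosDef)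
    (V : Matrix (Fin n) (Fin k) ℝ) (hVinj : ∀ x, V *ᵥ x = 0 → x = 0) :
    (Vᵀ * Dt * V).PosDef := by
  refine posDef_iff_dotProduct_mulVec.mpr ⟨?_, fun x hx => ?_⟩
  · exact isHermitian_conjTranspose_mul_mul V hDt.1
  · have hVx : V *ᵥ x ≠ 0 := fun hh => hx (hVinj x hh)
    have := hDt.dotProduct_mulVec_pos hVx
    simpa only [star_mulVec, dotProduct_mulVec, vecMul_vecMul,
      conjTranspose_eq_transpose_of_trivial] using this

private lemma my_expand {k h : ℕ} (M : Matrix (Fin k) (Fin k) ℝ) (hM : Mᵀ = M)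
    (C R P : Matrix (Fin k) (Fin h) ℝ) (t : ℝ) :
    Matrix.trace ((R + t•P)ᵀ * M * (R + t•P)) - 2*Matrix.trace ((R + t•P)ᵀ * C)
      = (Matrix.trace (Rᵀ*M*R) - 2*Matrix.trace (Rᵀ*C))
        + t^2 * Matrix.trace (Pᵀ*M*P) + 2*t*Matrix.trace (Pᵀ*(M*R - C)) := by
  have h1 : Matrix.trace (Rᵀ*(M*P)) = Matrix.trace (Pᵀ*(M*R)) := by
    rw [← Matrix.trace_transpose (Rᵀ*(M*P))]
    simp [Matrix.transpose_mul, hM, Matrix.mul_assoc]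
  simp only [Matrix.transpose_add, Matrix.transpose_smul, Matrix.add_mul, Matrix.mul_add,
    Matrix.smul_mul, Matrix.mul_smul, Matrix.mul_sub, Matrix.trace_add, Matrix.trace_smul,
    Matrix.trace_sub, smul_eq_mul, Matrix.mul_assoc]
  rw [h1]; ring

private lemma my_lap_psd {n : ℕ} (A : Matrix (Fin n) (Fin n) ℝ)
    (hA_symm : Aᵀ = A) (hA_nonneg : ∀ i j, 0 ≤ A i j) :
    (Matrix.diagonal (fun i => ∑ j, A i j) - A).PosSemidef := by
  have hsym : ∀ i j : Fin n, A j i = A i j := fun i j => by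
    have := congrFun (congrFun hA_symm j) i
    rw [Matrix.transpose_apply] at this
    exact this.symm
  refine posSemidef_iff_dotProduct_mulVec.mpr ⟨?_, fun x => ?_⟩
  · unfold Matrix.IsHermitian
    rw [conjTranspose_sub]
    have hAh : Aᴴ = A := hA_symm
    rw [hAh]
    congr 1
    exact (Matrix.diagonal_conjTranspose _).trans (by simp [starRingEnd_apply])
  · have hx : star x = x := rfl
    rw [hx, Matrix.sub_mulVec, dotProduct_sub]
    have h1 : x ⬝ᵥ (Matrix.diagonal (fun i => ∑ j, A i j) *ᵥ x)
        = ∑ i, ∑ j, A i j * (x i * x i) := by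
      simp only [dotProduct, Matrix.mulVec_diagonal]
      refine Finset.sum_congr rfl fun i _ => ?_
      rw [show x i * ((∑ j, A i j) * x i) = (∑ j, A i j) * (x i * x i) by ring,
        Finset.sum_mul]
    have h2 : x ⬝ᵥ (A *ᵥ x) = ∑ i, ∑ j, A i j * (x i * x j) := by
      simp only [dotProduct, Matrix.mulVec, Finset.mul_sum]
      exact Finset.sum_congr rfl fun i _ => Finset.sum_congr rfl fun j _ => by ring
    rw [h1, h2]
    have hswap : ∑ i, ∑ j, A i j * (x j * x j) = ∑ i, ∑ j, A i j * (x i * x i) := by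
      rw [Finset.sum_comm]
      exact Finset.sum_congr rfl fun i _ => Finset.sum_congr rfl fun j _ => by rw [hsym]
    have hE0 : (0:ℝ) ≤ ∑ i, ∑ j, A i j * (x i - x j)^2 :=
      Finset.sum_nonneg fun i _ => Finset.sum_nonneg fun j _ =>
        mul_nonneg (hA_nonneg i j) (sq_nonneg _)
    have hE : ∑ i, ∑ j, A i j * (x i - x j)^2
        = (∑ i, ∑ j, A i j * (x i * x i)) - 2*(∑ i, ∑ j, A i j * (x i * x j))
          + (∑ i, ∑ j, A i j * (x j * x j)) := by
      have hpt : ∀ i j : Fin n, A i j * (x i - x j)^2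
          = A i j * (x i * x i) - 2*(A i j * (x i * x j)) + A i j * (x j * x j) := by
        intros; ring
      simp_rw [hpt, Finset.sum_add_distrib, Finset.sum_sub_distrib, ← Finset.mul_sum]
    rw [hE, hswap] at hE0
    linarith

/-- Fix β ∈ (0,1], H ∈ ℝ^{n×h}, and V ∈ ℝ^{n×k} with orthonormal
columns.  Consider the reduced objective
G(R) = (1−β) Tr(Rᵀ (Vᵀ L V) R) + β ‖D̃^{1/2} V R − H‖_F² over R ∈ ℝ^{k×h}.
If R* minimizes G, then Z* = D̃_V^{1/2} R* is the unique solution of the linear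
system (I − (1−β) D̃_V^{-1/2} Ã_V D̃_V^{-1/2}) Z = β D̃_V^{-1/2} Vᵀ D̃^{1/2} H,
where Ã_V = Vᵀ Ã V and D̃_V = Vᵀ D̃ V.  Here S denotes the (unique)
positive-definite square root D̃_V^{1/2} of D̃_V, so S⁻¹ = D̃_V^{-1/2}. -/
theorem stmt_3 {n k h : ℕ} (A : Matrix (Fin n) (Fin n) ℝ)
    (hA_symm : Aᵀ = A) (hA_nonneg : ∀ i j, 0 ≤ A i j)
    (β : ℝ) (hβ : β ∈ Set.Ioc (0 : ℝ) 1)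
    (H : Matrix (Fin n) (Fin h) ℝ)
    (V : Matrix (Fin n) (Fin k) ℝ) (hV : Vᵀ * V = 1)
    (L : Matrix (Fin n) (Fin n) ℝ)
    (hL : L = Matrix.diagonal (fun i => ∑ j, A i j) - A)
    (Dtsqrt : Matrix (Fin n) (Fin n) ℝ)
    (hDtsqrt : Dtsqrt = Matrix.diagonal (fun i => Real.sqrt ((∑ j, A i j) + 1)))
    (S : Matrix (Fin k) (Fin k) ℝ) (hSpos : S.PosDef)
    (hSsq : S * S = Vᵀ * (Matrix.diagonal (fun i => ∑ j, A i j) + 1) * V)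
    (G : Matrix (Fin k) (Fin h) ℝ → ℝ)
    (hG : ∀ R : Matrix (Fin k) (Fin h) ℝ,
      G R = (1 - β) * Matrix.trace (Rᵀ * (Vᵀ * L * V) * R) +
        β * Matrix.trace ((Dtsqrt * V * R - H)ᵀ * (Dtsqrt * V * R - H)))
    (Rstar : Matrix (Fin k) (Fin h) ℝ)
    (hRstar : ∀ R : Matrix (Fin k) (Fin h) ℝ, G Rstar ≤ G R) :
    ((1 : Matrix (Fin k) (Fin k) ℝ) - (1 - β) • (S⁻¹ * (Vᵀ * (A + 1) * V) * S⁻¹)) *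
        (S * Rstar) = β • (S⁻¹ * (Vᵀ * Dtsqrt * H)) ∧
    ∀ Z : Matrix (Fin k) (Fin h) ℝ,
      ((1 : Matrix (Fin k) (Fin k) ℝ) - (1 - β) • (S⁻¹ * (Vᵀ * (A + 1) * V) * S⁻¹)) * Z
          = β • (S⁻¹ * (Vᵀ * Dtsqrt * H)) → Z = S * Rstar := by
  obtain ⟨hβ0, hβ1⟩ := hβ
  set d : Fin n → ℝ := fun i => ∑ j, A i j with hd
  set Dt : Matrix (Fin n) (Fin n) ℝ := Matrix.diagonal d + 1 with hDt
  set AV : Matrix (Fin k) (Fin k) ℝ := Vᵀ * (A + 1) * V with hAV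
  set C : Matrix (Fin k) (Fin h) ℝ := Vᵀ * Dtsqrt * H with hC
  have hd_nonneg : ∀ i, 0 ≤ d i := fun i => Finset.sum_nonneg fun j _ => hA_nonneg i j
  have hDtdiag : Dt = Matrix.diagonal (fun i => d i + 1) := by
    rw [hDt, ← Matrix.diagonal_one, Matrix.diagonal_add]
  have hDtpd : Dt.PosDef := by
    rw [hDtdiag]
    exact Matrix.PosDef.diagonal fun i => by have := hd_nonneg i; linarith
  have hDtsym : Dtsqrtᵀ = Dtsqrt := by rw [hDtsqrt, Matrix.diagonal_transpose]
  have hDtsq : Dtsqrt * Dtsqrt = Dt := by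
    rw [hDtsqrt, Matrix.diagonal_mul_diagonal, hDtdiag]
    exact congrArg Matrix.diagonal (funext fun i =>
      Real.mul_self_sqrt (by have := hd_nonneg i; simp only [hd] at this; linarith))
  have hVinj : ∀ x : Fin k → ℝ, V *ᵥ x = 0 → x = 0 := by
    intro x hx
    have h1 : (Vᵀ * V) *ᵥ x = x := by rw [hV, Matrix.one_mulVec]
    rw [← h1, ← Matrix.mulVec_mulVec, hx, Matrix.mulVec_zero]
  have hLpsd : L.PosSemidef := hL ▸ my_lap_psd A hA_symm hA_nonneg
  have hVLV : (Vᵀ * L * V).PosSemidef := hLpsd.conjTranspose_mul_mul_same V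
  have hVDtV : (Vᵀ * Dt * V).PosDef := my_pd_conj hDtpd V hVinj
  set M : Matrix (Fin k) (Fin k) ℝ := (1-β) • (Vᵀ * L * V) + β • (Vᵀ * Dt * V) with hM
  have hMpd : M.PosDef :=
    Matrix.PosDef.posSemidef_add (my_psd_smul hVLV (by linarith)) (my_pd_smul hVDtV hβ0)
  have hMsym : Mᵀ = M := hMpd.1
  -- reformulate G
  have hG2 : ∀ R : Matrix (Fin k) (Fin h) ℝ,
      G R = (Matrix.trace (Rᵀ*M*R) - 2*Matrix.trace (Rᵀ*(β•C))) + β*Matrix.trace (Hᵀ*H) := by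
    intro R
    rw [hG R]
    have eQQ : (Dtsqrt*V*R)ᵀ*(Dtsqrt*V*R) = Rᵀ*(Vᵀ*Dt*V)*R := by
      rw [Matrix.transpose_mul, Matrix.transpose_mul, hDtsym, ← hDtsq]
      simp [Matrix.mul_assoc]
    have e1 : (Dtsqrt*V*R - H)ᵀ*(Dtsqrt*V*R - H)
        = Rᵀ*(Vᵀ*Dt*V)*R - (Dtsqrt*V*R)ᵀ*H - Hᵀ*(Dtsqrt*V*R) + Hᵀ*H := by
      rw [Matrix.transpose_sub, Matrix.sub_mul, Matrix.mul_sub, Matrix.mul_sub, eQQ]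
      abel
    have e2 : Matrix.trace (Hᵀ*(Dtsqrt*V*R)) = Matrix.trace ((Dtsqrt*V*R)ᵀ*H) := by
      rw [← Matrix.trace_transpose (Hᵀ*(Dtsqrt*V*R))]
      simp [Matrix.transpose_mul, Matrix.mul_assoc]
    have e3 : Matrix.trace ((Dtsqrt*V*R)ᵀ*H) = Matrix.trace (Rᵀ*C) := by
      rw [hC, Matrix.transpose_mul, Matrix.transpose_mul, hDtsym]
      simp [Matrix.mul_assoc]
    have e4 : Matrix.trace (Rᵀ*M*R)
        = (1-β)*Matrix.trace (Rᵀ*(Vᵀ*L*V)*R) + β*Matrix.trace (Rᵀ*(Vᵀ*Dt*V)*R) := by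
      rw [hM]
      simp [Matrix.mul_add, Matrix.add_mul, Matrix.smul_mul, Matrix.mul_smul,
        Matrix.trace_add, Matrix.trace_smul, Matrix.mul_assoc]
    have e5 : Matrix.trace (Rᵀ*(β•C)) = β * Matrix.trace (Rᵀ*C) := by
      rw [Matrix.mul_smul, Matrix.trace_smul, smul_eq_mul]
    rw [e1, Matrix.trace_add, Matrix.trace_sub, Matrix.trace_sub, e2, e3, e4, e5]
    ring
  -- the normal equation
  have hmin : M * Rstar = β • C := by
    have hbz : ∀ P : Matrix (Fin k) (Fin h) ℝ,
        Matrix.trace (Pᵀ * (M * Rstar - β • C)) = 0 := by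
      intro P
      have hq : ∀ t : ℝ, 0 ≤ Matrix.trace (Pᵀ*M*P) * t^2
          + (2*Matrix.trace (Pᵀ*(M*Rstar - β•C))) * t := by
        intro t
        have h5 := hRstar (Rstar + t•P)
        rw [hG2, hG2] at h5
        have hex := my_expand M hMsym (β•C) Rstar P t
        -- rewrite trace((Rstar+t•P)ᵀ*M*(Rstar+t•P)) - ... via hex
        linarith [hex, h5]
      have := my_quad_zero _ _ hq
      linarith
    have hEzero : M * Rstar - β • C = 0 :=
      my_trace_zero _ (hbz (M * Rstar - β • C))
    exact sub_eq_zero.mp hEzero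
  -- invertibility of S
  have hdet : IsUnit S.det := (Matrix.isUnit_iff_isUnit_det S).mp hSpos.isUnit
  have hinv : S⁻¹ * S = 1 := Matrix.nonsing_inv_mul S hdet
  have hinv2 : S * S⁻¹ = 1 := Matrix.mul_nonsing_inv S hdet
  have hcan : ∀ {p : ℕ} (X : Matrix (Fin k) (Fin p) ℝ), S⁻¹ * (S * X) = X := by
    intro p X; rw [← Matrix.mul_assoc, hinv, Matrix.one_mul]
  have hMeq : M = S * S - (1-β) • AV := by
    have hLsplit : L = Dt - (A + 1) := by rw [hL, hDt]; abel
    rw [hM, hLsplit, Matrix.mul_sub, Matrix.sub_mul, hSsq, hAV]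
    module
  have hMR' : (S*S - (1-β)•AV) * Rstar = β • C := by rw [← hMeq]; exact hmin
  have goal1 : ((1 : Matrix (Fin k) (Fin k) ℝ) - (1-β) • (S⁻¹ * AV * S⁻¹)) * (S * Rstar)
      = β • (S⁻¹ * C) := by
    have key : S⁻¹ * ((S*S - (1-β)•AV) * Rstar) = β • (S⁻¹*C) := by
      rw [hMR', Matrix.mul_smul]
    rw [← key]
    simp only [Matrix.sub_mul, Matrix.mul_sub, Matrix.smul_mul, Matrix.mul_smul,
      Matrix.one_mul, Matrix.mul_assoc, hcan]
  refine ⟨goal1, ?_⟩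
  intro Z hZ
  set T : Matrix (Fin k) (Fin k) ℝ := 1 - (1-β) • (S⁻¹ * AV * S⁻¹) with hT
  have hTfact : T = S⁻¹ * ((S*S - (1-β)•AV) * S⁻¹) := by
    rw [hT, Matrix.sub_mul, Matrix.mul_sub, Matrix.smul_mul, Matrix.mul_smul,
      Matrix.mul_assoc S S S⁻¹, hinv2, Matrix.mul_one, hinv, Matrix.mul_assoc S⁻¹ AV S⁻¹]
  have hMunit : IsUnit (S*S - (1-β)•AV) := by rw [← hMeq]; exact hMpd.isUnit
  have hSinvUnit : IsUnit S⁻¹ := hSpos.inv.isUnit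
  have hTunit : IsUnit T := by
    rw [hTfact]; exact hSinvUnit.mul (hMunit.mul hSinvUnit)
  have hTdet : IsUnit T.det := (Matrix.isUnit_iff_isUnit_det T).mp hTunit
  have heq : T * Z = T * (S * Rstar) := by rw [hZ, goal1]
  calc Z = T⁻¹ * (T * Z) := by
        rw [← Matrix.mul_assoc, Matrix.nonsing_inv_mul T hTdet, Matrix.one_mul]
    _ = T⁻¹ * (T * (S*Rstar)) := by rw [heq]
    _ = S * Rstar := by
        rw [← Matrix.mul_assoc, Matrix.nonsing_inv_mul T hTdet, Matrix.one_mul]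
end

section
/- Fix β ∈ (0,1], H ∈ ℝ^{n×h}, and V ∈ ℝ^{n×k} with orthonormal columns (Vᵀ V = I_k). Let H' = D̃_V^{-1/2} Vᵀ D̃^{1/2} H, and define the sequence Z^{(1)} = H' and Z^{(k+1)} = (1−β) D̃_V^{-1/2} Ã_V D̃_V^{-1/2} Z^{(k)} + β H', where Ã_V = Vᵀ Ã V and D̃_V = Vᵀ D̃ V. Then Z^{(k)} converges as k → ∞ to the unique solution Z* of the linear system (I − (1−β) D̃_V^{-1/2} Ã_V D̃_V^{-1/2}) Z = β H'. -/
open Matrix Filter Topology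

private theorem quad_lap' {n : ℕ} (A : Matrix (Fin n) (Fin n) ℝ) (hA_symm : Aᵀ = A)
    (hA_nonneg : ∀ i j, 0 ≤ A i j) (x : Fin n → ℝ) :
    0 ≤ x ⬝ᵥ ((Matrix.diagonal (fun i => ∑ j, A i j) - A) *ᵥ x) := by
  have hAs : ∀ i j, A j i = A i j := fun i j => by
    rw [← congrFun (congrFun hA_symm i) j, transpose_apply]
  have hdot : x ⬝ᵥ ((Matrix.diagonal (fun i => ∑ j, A i j) - A) *ᵥ x)
      = (∑ i, ∑ j, A i j * (x i * x i)) - ∑ i, ∑ j, A i j * (x i * x j) := by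
    rw [sub_mulVec, dotProduct_sub]
    congr 1
    · simp [dotProduct, mulVec_diagonal, Finset.sum_mul, Finset.mul_sum]
      exact Finset.sum_congr rfl fun i _ => Finset.sum_congr rfl fun j _ => by ring
    · simp [dotProduct, mulVec, Finset.mul_sum]
      exact Finset.sum_congr rfl fun i _ => Finset.sum_congr rfl fun j _ => by ring
  have hswap : ∑ i, ∑ j, A i j * (x j * x j) = ∑ i, ∑ j, A i j * (x i * x i) := by
    rw [Finset.sum_comm]
    exact Finset.sum_congr rfl fun i _ => Finset.sum_congr rfl fun j _ => by rw [hAs]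
  have key : ∑ i, ∑ j, A i j * (x i - x j)^2
      = 2 * (x ⬝ᵥ ((Matrix.diagonal (fun i => ∑ j, A i j) - A) *ᵥ x)) := by
    rw [hdot]
    have : ∀ i j : Fin n, A i j * (x i - x j)^2
        = (A i j * (x i * x i) + A i j * (x j * x j)) - 2 * (A i j * (x i * x j)) :=
      fun i j => by ring
    simp_rw [this, Finset.sum_sub_distrib, Finset.sum_add_distrib, hswap,
      ← Finset.mul_sum]
    ring
  nlinarith [Finset.sum_nonneg (fun i (_ : i ∈ Finset.univ) =>
    Finset.sum_nonneg (fun j (_ : j ∈ Finset.univ) =>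
      mul_nonneg (hA_nonneg i j) (sq_nonneg (x i - x j))))]

private theorem quad_sig' {n : ℕ} (A : Matrix (Fin n) (Fin n) ℝ) (hA_symm : Aᵀ = A)
    (hA_nonneg : ∀ i j, 0 ≤ A i j) (x : Fin n → ℝ) :
    0 ≤ x ⬝ᵥ ((Matrix.diagonal (fun i => ∑ j, A i j) + A) *ᵥ x) := by
  have hAs : ∀ i j, A j i = A i j := fun i j => by
    rw [← congrFun (congrFun hA_symm i) j, transpose_apply]
  have hdot : x ⬝ᵥ ((Matrix.diagonal (fun i => ∑ j, A i j) + A) *ᵥ x)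
      = (∑ i, ∑ j, A i j * (x i * x i)) + ∑ i, ∑ j, A i j * (x i * x j) := by
    rw [add_mulVec, dotProduct_add]
    congr 1
    · simp [dotProduct, mulVec_diagonal, Finset.sum_mul, Finset.mul_sum]
      exact Finset.sum_congr rfl fun i _ => Finset.sum_congr rfl fun j _ => by ring
    · simp [dotProduct, mulVec, Finset.mul_sum]
      exact Finset.sum_congr rfl fun i _ => Finset.sum_congr rfl fun j _ => by ring
  have hswap : ∑ i, ∑ j, A i j * (x j * x j) = ∑ i, ∑ j, A i j * (x i * x i) := by
    rw [Finset.sum_comm]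
    exact Finset.sum_congr rfl fun i _ => Finset.sum_congr rfl fun j _ => by rw [hAs]
  have key : ∑ i, ∑ j, A i j * (x i + x j)^2
      = 2 * (x ⬝ᵥ ((Matrix.diagonal (fun i => ∑ j, A i j) + A) *ᵥ x)) := by
    rw [hdot]
    have : ∀ i j : Fin n, A i j * (x i + x j)^2
        = (A i j * (x i * x i) + A i j * (x j * x j)) + 2 * (A i j * (x i * x j)) :=
      fun i j => by ring
    simp_rw [this, Finset.sum_add_distrib, hswap, ← Finset.mul_sum]
    ring
  nlinarith [Finset.sum_nonneg (fun i (_ : i ∈ Finset.univ) =>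
    Finset.sum_nonneg (fun j (_ : j ∈ Finset.univ) =>
      mul_nonneg (hA_nonneg i j) (sq_nonneg (x i + x j))))]

private theorem conj_dot' {n k : ℕ} (P : Matrix (Fin n) (Fin k) ℝ)
    (Q : Matrix (Fin n) (Fin n) ℝ) (x : Fin k → ℝ) :
    x ⬝ᵥ ((Pᵀ * Q * P) *ᵥ x) = (P *ᵥ x) ⬝ᵥ (Q *ᵥ (P *ᵥ x)) := by
  rw [← mulVec_mulVec, ← mulVec_mulVec, dotProduct_mulVec, vecMul_transpose]

/-- Fix β ∈ (0,1], H ∈ ℝ^{n×h}, and V ∈ ℝ^{n×k} with orthonormal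
columns.  Let H' = D̃_V^{-1/2} Vᵀ D̃^{1/2} H, and define Z^{(1)} = H' and
Z^{(k+1)} = (1−β) D̃_V^{-1/2} Ã_V D̃_V^{-1/2} Z^{(k)} + β H', where Ã_V = Vᵀ Ã V
and D̃_V = Vᵀ D̃ V.  Then Z^{(k)} converges to the unique solution Z* of
(I − (1−β) D̃_V^{-1/2} Ã_V D̃_V^{-1/2}) Z = β H'.  Here S denotes the (unique)
positive-definite square root D̃_V^{1/2} of D̃_V, so S⁻¹ = D̃_V^{-1/2}. -/
theorem stmt_4 {n k h : ℕ} (A : Matrix (Fin n) (Fin n) ℝ)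
    (hA_symm : Aᵀ = A) (hA_nonneg : ∀ i j, 0 ≤ A i j)
    (β : ℝ) (hβ : β ∈ Set.Ioc (0 : ℝ) 1)
    (H : Matrix (Fin n) (Fin h) ℝ)
    (V : Matrix (Fin n) (Fin k) ℝ) (hV : Vᵀ * V = 1)
    (Dtsqrt : Matrix (Fin n) (Fin n) ℝ)
    (hDtsqrt : Dtsqrt = Matrix.diagonal (fun i => Real.sqrt ((∑ j, A i j) + 1)))
    (S : Matrix (Fin k) (Fin k) ℝ) (hSpos : S.PosDef)
    (hSsq : S * S = Vᵀ * (Matrix.diagonal (fun i => ∑ j, A i j) + 1) * V)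
    (H' : Matrix (Fin k) (Fin h) ℝ) (hH' : H' = S⁻¹ * (Vᵀ * Dtsqrt * H))
    (Z : ℕ → Matrix (Fin k) (Fin h) ℝ)
    (hZ1 : Z 0 = H')
    (hZrec : ∀ t : ℕ,
      Z (t + 1) = (1 - β) • (S⁻¹ * (Vᵀ * (A + 1) * V) * S⁻¹ * Z t) + β • H') :
    ∃ Zstar : Matrix (Fin k) (Fin h) ℝ,
      (∀ W : Matrix (Fin k) (Fin h) ℝ,
        ((1 : Matrix (Fin k) (Fin k) ℝ) - (1 - β) • (S⁻¹ * (Vᵀ * (A + 1) * V) * S⁻¹)) * W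
            = β • H' ↔ W = Zstar) ∧
      Tendsto Z atTop (𝓝 Zstar) := by
  obtain ⟨hβ0, hβ1⟩ := hβ
  set d : Fin n → ℝ := fun i => ∑ j, A i j with hd
  set N : Matrix (Fin k) (Fin k) ℝ := S⁻¹ * (Vᵀ * (A + 1) * V) * S⁻¹ with hN
  set M : Matrix (Fin k) (Fin k) ℝ := (1 - β) • N with hM
  have hdet : IsUnit S.det := isUnit_iff_ne_zero.2 (ne_of_gt hSpos.det_pos)
  have hS1 : S⁻¹ * S = 1 := nonsing_inv_mul S hdet
  have hS2 : S * S⁻¹ = 1 := mul_nonsing_inv S hdet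
  have hSsymm : Sᵀ = S := by
    ext i j
    rw [transpose_apply]
    simpa using congrFun (congrFun hSpos.1.eq i) j
  have hSinvsymm : (S⁻¹)ᵀ = S⁻¹ := by rw [transpose_nonsing_inv, hSsymm]
  have hNsymm : Nᵀ = N := by
    have hBt : (Vᵀ * (A + 1) * V)ᵀ = Vᵀ * (A + 1) * V := by
      rw [transpose_mul, transpose_mul, transpose_transpose, transpose_add, hA_symm,
        transpose_one, Matrix.mul_assoc]
    rw [hN, transpose_mul, transpose_mul, hSinvsymm, hBt]
    simp [Matrix.mul_assoc]
  have hmid : S⁻¹ * (S * S) * S⁻¹ = 1 := by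
    rw [show S⁻¹ * (S * S) * S⁻¹ = (S⁻¹ * S) * (S * S⁻¹) from by simp [Matrix.mul_assoc],
      hS1, hS2, one_mul]
  have hid1 : (1 : Matrix (Fin k) (Fin k) ℝ) - N
      = (V * S⁻¹)ᵀ * (Matrix.diagonal d - A) * (V * S⁻¹) := by
    have hPt : (V * S⁻¹)ᵀ = S⁻¹ * Vᵀ := by rw [transpose_mul, hSinvsymm]
    have hsub : Matrix.diagonal d - A = (Matrix.diagonal d + 1) - (A + 1) := by abel
    rw [hPt, hsub]
    have hdist : S⁻¹ * Vᵀ * ((Matrix.diagonal d + 1) - (A + 1)) * (V * S⁻¹)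
        = S⁻¹ * (Vᵀ * (Matrix.diagonal d + 1) * V) * S⁻¹
          - S⁻¹ * (Vᵀ * (A + 1) * V) * S⁻¹ := by
      rw [Matrix.mul_sub, Matrix.sub_mul]
      simp [Matrix.mul_assoc]
    rw [hdist, ← hSsq, hmid, hN]
  have hid2 : (1 : Matrix (Fin k) (Fin k) ℝ) + N
      = (V * S⁻¹)ᵀ * ((Matrix.diagonal d + A) + (1 + 1)) * (V * S⁻¹) := by
    have hPt : (V * S⁻¹)ᵀ = S⁻¹ * Vᵀ := by rw [transpose_mul, hSinvsymm]
    have hadd : (Matrix.diagonal d + A) + ((1 : Matrix (Fin n) (Fin n) ℝ) + 1)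
        = (Matrix.diagonal d + 1) + (A + 1) := by abel
    rw [hPt, hadd]
    have hdist : S⁻¹ * Vᵀ * ((Matrix.diagonal d + 1) + (A + 1)) * (V * S⁻¹)
        = S⁻¹ * (Vᵀ * (Matrix.diagonal d + 1) * V) * S⁻¹
          + S⁻¹ * (Vᵀ * (A + 1) * V) * S⁻¹ := by
      rw [Matrix.mul_add, Matrix.add_mul]
      simp [Matrix.mul_assoc]
    rw [hdist, ← hSsq, hmid, hN]
  have dps : ∀ {m : ℕ} (v : Fin m → ℝ), 0 ≤ v ⬝ᵥ v := fun v =>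
    Finset.sum_nonneg fun i _ => mul_self_nonneg _
  have q1 : ∀ x : Fin k → ℝ, 0 ≤ x ⬝ᵥ (((1 : Matrix (Fin k) (Fin k) ℝ) - N) *ᵥ x) := by
    intro x
    rw [hid1, conj_dot']
    exact quad_lap' A hA_symm hA_nonneg _
  have q2 : ∀ x : Fin k → ℝ, 0 ≤ x ⬝ᵥ (((1 : Matrix (Fin k) (Fin k) ℝ) + N) *ᵥ x) := by
    intro x
    rw [hid2, conj_dot']
    set y := (V * S⁻¹) *ᵥ x with hy
    have hone : ((1 : Matrix (Fin n) (Fin n) ℝ) + 1) *ᵥ y = y + y := by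
      rw [add_mulVec, one_mulVec]
    rw [add_mulVec, dotProduct_add, hone, dotProduct_add]
    have h1 := quad_sig' A hA_symm hA_nonneg y
    have h2 := dps y
    rw [← hd] at h1
    linarith
  have qcontr : ∀ y : Fin k → ℝ, (N *ᵥ y) ⬝ᵥ (N *ᵥ y) ≤ y ⬝ᵥ y := by
    intro y
    have hsym : ∀ (a b : Fin k → ℝ), a ⬝ᵥ (N *ᵥ b) = (N *ᵥ a) ⬝ᵥ b := by
      intro a b
      rw [dotProduct_mulVec]
      congr 1
      conv_lhs => rw [← hNsymm]
      rw [vecMul_transpose]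
    set b := N *ᵥ y with hb
    set c := N *ᵥ b with hc
    have hac : y ⬝ᵥ c = b ⬝ᵥ b := by rw [hc, hsym y b]
    have ha1 := q1 (((1 : Matrix (Fin k) (Fin k) ℝ) + N) *ᵥ y)
    have ha2 := q2 (((1 : Matrix (Fin k) (Fin k) ℝ) - N) *ᵥ y)
    have e1 : ((1 : Matrix (Fin k) (Fin k) ℝ) + N) *ᵥ y = y + b := by
      rw [add_mulVec, one_mulVec]
    have e2 : ((1 : Matrix (Fin k) (Fin k) ℝ) - N) *ᵥ y = y - b := by
      rw [sub_mulVec, one_mulVec]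
    have e3 : ((1 : Matrix (Fin k) (Fin k) ℝ) - N) *ᵥ (y + b) = (y + b) - (b + c) := by
      rw [sub_mulVec, one_mulVec, mulVec_add]
    have e4 : ((1 : Matrix (Fin k) (Fin k) ℝ) + N) *ᵥ (y - b) = (y - b) + (b - c) := by
      rw [add_mulVec, one_mulVec, mulVec_sub]
    rw [e1, e3] at ha1
    rw [e2, e4] at ha2
    have hx1 : (y + b) ⬝ᵥ ((y + b) - (b + c)) = y ⬝ᵥ y - y ⬝ᵥ c + (b ⬝ᵥ y - b ⬝ᵥ c) := by
      simp only [dotProduct_sub, dotProduct_add, add_dotProduct]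
      ring
    have hx2 : (y - b) ⬝ᵥ ((y - b) + (b - c)) = y ⬝ᵥ y - y ⬝ᵥ c - (b ⬝ᵥ y - b ⬝ᵥ c) := by
      simp only [dotProduct_sub, dotProduct_add, sub_dotProduct]
      ring
    rw [hx1] at ha1
    rw [hx2] at ha2
    linarith
  have qpow : ∀ (t : ℕ) (e : Fin k → ℝ), ((N ^ t) *ᵥ e) ⬝ᵥ ((N ^ t) *ᵥ e) ≤ e ⬝ᵥ e := by
    intro t
    induction t with
    | zero => intro e; simp
    | succ t ih =>
        intro e
        have hps : N ^ (t + 1) = N ^ t * N := pow_succ N t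
        rw [hps, ← mulVec_mulVec]
        exact le_trans (ih _) (qcontr e)
  have hentry : ∀ (t : ℕ) (i l : Fin k), |(N ^ t) i l| ≤ 1 := by
    intro t i l
    have hv : (N ^ t) *ᵥ Pi.single l 1 = fun i' => (N ^ t) i' l := by
      ext i'
      simp [mulVec, dotProduct, Pi.single_apply]
    have h1 := qpow t (Pi.single l 1)
    rw [hv] at h1
    have h3 : (Pi.single l (1:ℝ)) ⬝ᵥ (Pi.single l 1) = 1 := by
      simp [dotProduct, Pi.single_apply]
    rw [h3] at h1
    have h1' : (∑ i', (N ^ t) i' l * (N ^ t) i' l) ≤ 1 := by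
      simpa [dotProduct] using h1
    have h2 : ((N ^ t) i l) * ((N ^ t) i l)
        ≤ ∑ i', (N ^ t) i' l * (N ^ t) i' l :=
      Finset.single_le_sum (fun j (_ : j ∈ Finset.univ) => mul_self_nonneg ((N ^ t) j l))
        (Finset.mem_univ i)
    nlinarith [abs_nonneg ((N ^ t) i l), sq_abs ((N ^ t) i l)]
  have hβ' : 0 ≤ 1 - β := by linarith
  have hβ'' : 1 - β < 1 := by linarith
  have hdetM : IsUnit ((1 : Matrix (Fin k) (Fin k) ℝ) - M).det := by
    rw [isUnit_iff_ne_zero]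
    intro hdet0
    obtain ⟨v, hv0, hveq⟩ := Matrix.exists_mulVec_eq_zero_iff.2 hdet0
    have hfix : M *ᵥ v = v := by
      have hh := hveq
      rw [sub_mulVec, one_mulVec, sub_eq_zero] at hh
      exact hh.symm
    have hMv : M *ᵥ v = (1 - β) • (N *ᵥ v) := by rw [hM, smul_mulVec]
    have hvv : 0 < v ⬝ᵥ v := by
      rcases lt_or_eq_of_le (dps v) with hlt | heq
      · exact hlt
      · exact absurd (dotProduct_self_eq_zero.1 heq.symm) hv0
    have hb : v ⬝ᵥ v = (1 - β)^2 * ((N *ᵥ v) ⬝ᵥ (N *ᵥ v)) := by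
      conv_lhs => rw [← hfix, hMv]
      rw [smul_dotProduct, dotProduct_smul, smul_eq_mul, smul_eq_mul]
      ring
    have hcon := qcontr v
    nlinarith [mul_pos hβ0 hvv, mul_pos (mul_pos hβ0 hβ0) hvv, dps (N *ᵥ v)]
  set Zstar : Matrix (Fin k) (Fin h) ℝ :=
    ((1 : Matrix (Fin k) (Fin k) ℝ) - M)⁻¹ * (β • H') with hZstar
  have heq : ((1 : Matrix (Fin k) (Fin k) ℝ) - M) * Zstar = β • H' := by
    rw [hZstar, ← Matrix.mul_assoc, mul_nonsing_inv _ hdetM, Matrix.one_mul]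
  refine ⟨Zstar, fun W => ⟨fun hW => ?_, fun hW => by rw [hW]; exact heq⟩, ?_⟩
  · calc W = ((1 - M)⁻¹ * (1 - M)) * W := by rw [nonsing_inv_mul _ hdetM, Matrix.one_mul]
      _ = (1 - M)⁻¹ * ((1 - M) * W) := by rw [Matrix.mul_assoc]
      _ = Zstar := by rw [hW, hZstar]
  · have hfixZ : Zstar = M * Zstar + β • H' := by
      rw [← heq, Matrix.sub_mul, Matrix.one_mul]
      abel
    have hE : ∀ t, Z t - Zstar = M ^ t * (Z 0 - Zstar) := by
      intro t
      induction t with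
      | zero => simp
      | succ t ih =>
          have hrec := hZrec t
          have hMZ : ∀ X : Matrix (Fin k) (Fin h) ℝ, M * X = (1 - β) • (N * X) :=
            fun X => by rw [hM, Matrix.smul_mul]
          calc Z (t + 1) - Zstar = (M * Z t + β • H') - (M * Zstar + β • H') := by
                rw [hrec, ← hfixZ, hMZ]
            _ = M * (Z t - Zstar) := by rw [Matrix.mul_sub]; abel
            _ = M * (M ^ t * (Z 0 - Zstar)) := by rw [ih]
            _ = (M * M ^ t) * (Z 0 - Zstar) := by rw [Matrix.mul_assoc]
            _ = M ^ (t + 1) * (Z 0 - Zstar) := by rw [← pow_succ']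
    have hMt : ∀ t : ℕ, M ^ t = (1 - β) ^ t • N ^ t := fun t => smul_pow _ _ t
    have htend0 : Tendsto (fun t => Z t - Zstar) atTop (𝓝 0) := by
      refine tendsto_pi_nhds.2 ?_
      intro i
      rw [tendsto_pi_nhds]
      intro j
      have hbound : ∀ t : ℕ, ‖(Z t - Zstar) i j‖
          ≤ (1 - β) ^ t * (∑ l, |(Z 0 - Zstar) l j|) := by
        intro t
        rw [hE t, hMt t, Matrix.smul_mul, Matrix.smul_apply, smul_eq_mul,
          Real.norm_eq_abs, abs_mul, abs_pow, abs_of_nonneg hβ']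
        apply mul_le_mul_of_nonneg_left _ (pow_nonneg hβ' t)
        calc |(N ^ t * (Z 0 - Zstar)) i j| = |∑ l, (N ^ t) i l * (Z 0 - Zstar) l j| := by
              rw [Matrix.mul_apply]
          _ ≤ ∑ l, |(N ^ t) i l * (Z 0 - Zstar) l j| := Finset.abs_sum_le_sum_abs _ _
          _ ≤ ∑ l, |(Z 0 - Zstar) l j| := by
              apply Finset.sum_le_sum
              intro l _
              rw [abs_mul]
              calc |(N ^ t) i l| * |(Z 0 - Zstar) l j|
                  ≤ 1 * |(Z 0 - Zstar) l j| :=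
                    mul_le_mul_of_nonneg_right (hentry t i l) (abs_nonneg _)
                _ = |(Z 0 - Zstar) l j| := one_mul _
      have hg : Tendsto (fun t : ℕ => (1 - β) ^ t * (∑ l, |(Z 0 - Zstar) l j|))
          atTop (𝓝 0) := by
        have hh := (tendsto_pow_atTop_nhds_zero_of_lt_one hβ' hβ'').mul_const
          (∑ l, |(Z 0 - Zstar) l j|)
        simpa using hh
      exact squeeze_zero_norm (fun t => by simpa using hbound t) hg
    have hfin : Tendsto (fun t => (Z t - Zstar) + Zstar) atTop (𝓝 (0 + Zstar)) :=
      htend0.add_const Zstar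
    simpa using hfin
end

section
/- Let V ∈ ℝ^{n×k}, let {C_1, …, C_{k'}} be a partition of {1, …, n} into nonempty clusters, and let P be its normalized partition matrix. Then ‖P Pᵀ V − V‖_F² = Σ_{j=1}^{k'} Σ_{i ∈ C_j} ‖v_i − g_j‖₂², where v_i ∈ ℝ^k is the i-th row of V and g_j = (1/|C_j|) Σ_{i ∈ C_j} v_i is the centroid of cluster C_j; i.e., ‖P Pᵀ V − V‖_F² equals the k-means cost of the partition with respect to the rows of V. -/
open Matrix

/-- The cluster of index `j` under the partition of `{1,…,n}` induced by `f`. -/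
def cluster {n k' : ℕ} (f : Fin n → Fin k') (j : Fin k') : Finset (Fin n) :=
  Finset.univ.filter (fun i => f i = j)

/-- The normalized partition matrix of the partition induced by `f`:
`P i j = 1/√|C_j|` if `i ∈ C_j` and `0` otherwise. -/
noncomputable def normPartition {n k' : ℕ} (f : Fin n → Fin k') :
    Matrix (Fin n) (Fin k') ℝ :=
  Matrix.of fun i j => if f i = j then 1 / Real.sqrt ((cluster f j).card) else 0

/-- The centroid of cluster `C_j` with respect to the rows of `V`. -/
noncomputable def centroid {n k k' : ℕ} (V : Matrix (Fin n) (Fin k) ℝ)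
    (f : Fin n → Fin k') (j : Fin k') : Fin k → ℝ :=
  fun l => ((cluster f j).card : ℝ)⁻¹ * ∑ i ∈ cluster f j, V i l

/-- The k-means cost of the partition induced by `f` with respect to the rows of `V`:
`Σ_j Σ_{i ∈ C_j} ‖v_i − g_j‖₂²`. -/
noncomputable def kmeansCost {n k k' : ℕ} (V : Matrix (Fin n) (Fin k) ℝ)
    (f : Fin n → Fin k') : ℝ :=
  ∑ j : Fin k', ∑ i ∈ cluster f j, ∑ l : Fin k, (V i l - centroid V f j l) ^ 2

lemma key {n k k' : ℕ} (V : Matrix (Fin n) (Fin k) ℝ) (f : Fin n → Fin k')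
    (i : Fin n) (l : Fin k) :
    (normPartition f * (normPartition f)ᵀ * V) i l = centroid V f (f i) l := by
  have hmem : i ∈ cluster f (f i) := by simp [cluster]
  have hc : (0 : ℝ) < ((cluster f (f i)).card : ℝ) := by
    exact_mod_cast Finset.card_pos.2 ⟨i, hmem⟩
  simp only [Matrix.mul_apply, transpose_apply, normPartition, Matrix.of_apply]
  have : ∀ i' : Fin n,
      (∑ j : Fin k', (if f i = j then 1 / Real.sqrt ((cluster f j).card) else 0) *
        (if f i' = j then 1 / Real.sqrt ((cluster f j).card) else 0)) * V i' l
      = if f i' = f i then (((cluster f (f i)).card : ℝ))⁻¹ * V i' l else 0 := by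
    intro i'
    rw [Finset.sum_eq_single (f i)]
    · by_cases h : f i' = f i
      · simp only [h, if_true, if_pos rfl, one_div, ite_true, eq_self_iff_true]
        rw [← mul_inv, Real.mul_self_sqrt hc.le]
      · simp [h]
    · intro b _ hb; simp [Ne.symm hb]
    · simp
  simp only [this]
  rw [← Finset.sum_filter]
  simp only [centroid, cluster, Finset.mul_sum]

/-- Let V ∈ ℝ^{n×k}, let {C_1,…,C_{k'}} be a partition of {1,…,n} into
nonempty clusters (induced by a surjective map f), and let P be its normalized
partition matrix.  Then ‖P Pᵀ V − V‖_F² equals the k-means cost of the partition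
with respect to the rows of V.  Here ‖M‖_F² = Tr(Mᵀ M). -/
theorem stmt_7 {n k k' : ℕ} (V : Matrix (Fin n) (Fin k) ℝ)
    (f : Fin n → Fin k') (hf : Function.Surjective f)
    (P : Matrix (Fin n) (Fin k') ℝ) (hP : P = normPartition f) :
    Matrix.trace ((P * Pᵀ * V - V)ᵀ * (P * Pᵀ * V - V)) = kmeansCost V f := by
  subst hP
  have h1 : Matrix.trace ((normPartition f * (normPartition f)ᵀ * V - V)ᵀ *
      (normPartition f * (normPartition f)ᵀ * V - V)) =
      ∑ l : Fin k, ∑ i : Fin n, (V i l - centroid V f (f i) l) ^ 2 := by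
    have hM : normPartition f * (normPartition f)ᵀ * V =
        Matrix.of fun i l => centroid V f (f i) l := by
      ext i l; exact key V f i l
    rw [hM]
    simp only [Matrix.trace, Matrix.diag, Matrix.mul_apply, transpose_apply, Matrix.sub_apply,
      Matrix.of_apply]
    apply Finset.sum_congr rfl; intro l _
    apply Finset.sum_congr rfl; intro i _
    ring
  rw [h1, Finset.sum_comm]
  have h2 : kmeansCost V f = ∑ j : Fin k',
      ∑ i ∈ Finset.univ.filter (fun i => f i = j),
        (∑ l : Fin k, (V i l - centroid V f (f i) l) ^ 2) := by
    rw [kmeansCost]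
    apply Finset.sum_congr rfl; intro j _
    apply Finset.sum_congr rfl; intro i hi
    simp only [cluster, Finset.mem_filter] at hi
    rw [hi.2]
  rw [h2, Finset.sum_fiberwise]
end

section
/- Let V ∈ ℝ^{n×k} have orthonormal columns (Vᵀ V = I_k), let {C_1, …, C_{k'}} be a partition of {1, …, n} into nonempty clusters with normalized partition matrix P, and let Cost(P) = Σ_{j=1}^{k'} Σ_{i ∈ C_j} ‖v_i − g_j‖₂² be the k-means cost of the partition with respect to the rows v_1, …, v_n of V, where g_j = (1/|C_j|) Σ_{i ∈ C_j} v_i. Then Tr(I_k − Vᵀ P Pᵀ V) = Cost(P); equivalently, the nuclear norm of I_k − Vᵀ P Pᵀ V (which is positive semidefinite) equals Cost(P). -/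
open Matrix

/-- The nuclear norm of a real square matrix: the sum of its singular values,
i.e. of the square roots of the eigenvalues of Mᵀ M. -/
noncomputable def nuclearNorm {k : ℕ} (M : Matrix (Fin k) (Fin k) ℝ) : ℝ :=
  ∑ i, Real.sqrt ((Matrix.isHermitian_conjTranspose_mul_self M).eigenvalues i)

lemma card_pos {n k' : ℕ} (f : Fin n → Fin k') (hf : Function.Surjective f) (j : Fin k') :
    0 < ((cluster f j).card : ℝ) := by
  have := hf j
  obtain ⟨i, hi⟩ := this
  have : i ∈ cluster f j := by simp [cluster, hi]
  exact_mod_cast Finset.card_pos.2 ⟨i, this⟩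

lemma PtP {n k' : ℕ} (f : Fin n → Fin k') (hf : Function.Surjective f) :
    (normPartition f)ᵀ * normPartition f = 1 := by
  ext j j'
  rw [Matrix.mul_apply]
  simp only [Matrix.transpose_apply, normPartition, Matrix.of_apply, Matrix.one_apply]
  rcases eq_or_ne j j' with rfl | hjj'
  · rw [if_pos rfl]
    have hstep : ∀ x : Fin n, (if f x = j then 1 / Real.sqrt ((cluster f j).card) else 0) *
        (if f x = j then 1 / Real.sqrt ((cluster f j).card) else 0) =
        if f x = j then (1 / Real.sqrt ((cluster f j).card)) *
          (1 / Real.sqrt ((cluster f j).card)) else 0 := by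
      intro x; split <;> simp
    rw [Finset.sum_congr rfl (fun x _ => hstep x), ← Finset.sum_filter]
    have hc := card_pos f hf j
    rw [show (Finset.univ.filter fun i => f i = j) = cluster f j from rfl]
    rw [Finset.sum_const, nsmul_eq_mul]
    rw [one_div, ← mul_inv, Real.mul_self_sqrt (le_of_lt hc)]
    field_simp
  · rw [if_neg hjj']
    apply Finset.sum_eq_zero
    intro i _
    split_ifs with h1 h2 <;> simp_all

lemma sum_cluster {n k k' : ℕ} (V : Matrix (Fin n) (Fin k) ℝ) (f : Fin n → Fin k')
    (hf : Function.Surjective f) (j : Fin k') (l : Fin k) :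
    ∑ i ∈ cluster f j, V i l = ((cluster f j).card : ℝ) * centroid V f j l := by
  rw [centroid, ← mul_assoc, mul_inv_cancel₀ (ne_of_gt (card_pos f hf j)), one_mul]

-- trace identity
theorem traceId {n k k' : ℕ} (V : Matrix (Fin n) (Fin k) ℝ) (hV : Vᵀ * V = 1)
    (f : Fin n → Fin k') (hf : Function.Surjective f) :
    Matrix.trace ((1 : Matrix (Fin k) (Fin k) ℝ) - Vᵀ * normPartition f * (normPartition f)ᵀ * V)
      = ∑ j : Fin k', ∑ i ∈ cluster f j, ∑ l : Fin k, (V i l - centroid V f j l) ^ 2 := by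
  have h1 : Matrix.trace (1 : Matrix (Fin k) (Fin k) ℝ) = ∑ i : Fin n, ∑ l : Fin k, V i l ^ 2 := by
    rw [← hV, Matrix.trace]
    simp only [Matrix.diag_apply, Matrix.mul_apply, Matrix.transpose_apply]
    rw [Finset.sum_comm]
    exact Finset.sum_congr rfl fun i _ => Finset.sum_congr rfl fun l _ => (sq (V i l)).symm
  have hN : ∀ (j : Fin k') (l : Fin k), ((normPartition f)ᵀ * V) j l
      = Real.sqrt ((cluster f j).card) * centroid V f j l := by
    intro j l
    have hcj := card_pos f hf j
    rw [Matrix.mul_apply]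
    simp only [Matrix.transpose_apply, normPartition, Matrix.of_apply]
    rw [Finset.sum_congr rfl fun i (_ : i ∈ Finset.univ) =>
      (ite_mul _ _ _ (V i l)).trans (by rw [zero_mul]),
      ← Finset.sum_filter]
    rw [show (Finset.univ.filter fun i => f i = j) = cluster f j from rfl]
    rw [← Finset.mul_sum, sum_cluster V f hf j l, one_div, ← mul_assoc]
    congr 1
    field_simp
    rw [Real.sq_sqrt hcj.le]
  have h2 : Matrix.trace (Vᵀ * normPartition f * (normPartition f)ᵀ * V)
      = ∑ j : Fin k', ((cluster f j).card : ℝ) * ∑ l : Fin k, centroid V f j l ^ 2 := by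
    have hfact : Vᵀ * normPartition f * (normPartition f)ᵀ * V
        = ((normPartition f)ᵀ * V)ᵀ * ((normPartition f)ᵀ * V) := by
      rw [Matrix.transpose_mul, Matrix.transpose_transpose, Matrix.mul_assoc, Matrix.mul_assoc]
    rw [hfact, Matrix.trace]
    have hdiag : ∀ l : Fin k, (((normPartition f)ᵀ * V)ᵀ * ((normPartition f)ᵀ * V)).diag l
        = ∑ j : Fin k', ((cluster f j).card : ℝ) * centroid V f j l ^ 2 := by
      intro l
      rw [Matrix.diag_apply, Matrix.mul_apply]
      refine Finset.sum_congr rfl fun j _ => ?_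
      rw [Matrix.transpose_apply, hN j l, ← sq, mul_pow,
        Real.sq_sqrt (card_pos f hf j).le]
    rw [Finset.sum_congr rfl fun l _ => hdiag l, Finset.sum_comm]
    exact Finset.sum_congr rfl fun j _ => (Finset.mul_sum _ _ _).symm
  have key : ∀ j : Fin k', ∑ i ∈ cluster f j, ∑ l : Fin k, (V i l - centroid V f j l) ^ 2
      = (∑ i ∈ cluster f j, ∑ l : Fin k, V i l ^ 2)
        - ((cluster f j).card : ℝ) * ∑ l : Fin k, centroid V f j l ^ 2 := by
    intro j
    have e1 : ∀ i : Fin n, ∑ l : Fin k, (V i l - centroid V f j l) ^ 2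
        = (∑ l : Fin k, V i l ^ 2) - 2 * ∑ l : Fin k, centroid V f j l * V i l
          + ∑ l : Fin k, centroid V f j l ^ 2 := by
      intro i
      rw [Finset.mul_sum, ← Finset.sum_sub_distrib, ← Finset.sum_add_distrib]
      exact Finset.sum_congr rfl fun l _ => by ring
    rw [Finset.sum_congr rfl fun i _ => e1 i]
    rw [Finset.sum_add_distrib, Finset.sum_sub_distrib, Finset.sum_const, ← Finset.mul_sum]
    have e2 : ∑ i ∈ cluster f j, ∑ l : Fin k, centroid V f j l * V i l
        = ((cluster f j).card : ℝ) * ∑ l : Fin k, centroid V f j l ^ 2 := by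
      rw [Finset.sum_comm]
      have e3 : ∀ l : Fin k, ∑ i ∈ cluster f j, centroid V f j l * V i l
          = ((cluster f j).card : ℝ) * centroid V f j l ^ 2 := by
        intro l
        rw [← Finset.mul_sum, sum_cluster V f hf j l]
        ring
      rw [Finset.sum_congr rfl fun l _ => e3 l, ← Finset.mul_sum]
    rw [e2, nsmul_eq_mul]
    ring
  rw [Matrix.trace_sub, h1, h2, Finset.sum_congr rfl fun j _ => key j, Finset.sum_sub_distrib]
  congr 1
  simp only [cluster]
  exact (Finset.sum_fiberwise Finset.univ f fun i => ∑ l : Fin k, V i l ^ 2).symm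

lemma nuclearNorm_eq_trace_of_posSemidef {k : ℕ} (M : Matrix (Fin k) (Fin k) ℝ)
    (hM : M.PosSemidef) : nuclearNorm M = Matrix.trace M := by
  have hMM : (Mᴴ * M).PosSemidef := Matrix.posSemidef_conjTranspose_mul_self M
  have hsq : M ^ 2 = Mᴴ * M := by rw [hM.1, pow_two]
  have hMeq : M = (Matrix.isHermitian_conjTranspose_mul_self M).cfc Real.sqrt := by
    open scoped MatrixOrder in
    have h0 : (0 : Matrix (Fin k) (Fin k) ℝ) ≤ M := hM.nonneg
    open scoped MatrixOrder in
    have h1 : (0 : Matrix (Fin k) (Fin k) ℝ) ≤ Mᴴ * M := hMM.nonneg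
    open scoped MatrixOrder in
    have h2 : CFC.sqrt (Mᴴ * M) = M := by rw [hM.1.eq]; exact CFC.sqrt_mul_self M h0
    open scoped MatrixOrder in
    rw [CFC.sqrt_eq_real_sqrt _ h1, cfcₙ_eq_cfc,
      Matrix.IsHermitian.cfc_eq (Matrix.isHermitian_conjTranspose_mul_self M)] at h2
    exact h2.symm
  rw [nuclearNorm]
  conv_rhs => rw [hMeq]
  unfold Matrix.IsHermitian.cfc
  rw [Unitary.conjStarAlgAut_apply, Matrix.trace_mul_comm]
  simp only [← Matrix.mul_assoc]
  rw [Matrix.UnitaryGroup.star_mul_self, Matrix.one_mul, Matrix.trace_diagonal]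
  norm_num

lemma posSemidef_M {n k k' : ℕ} (V : Matrix (Fin n) (Fin k) ℝ) (hV : Vᵀ * V = 1)
    (f : Fin n → Fin k') (hf : Function.Surjective f) :
    ((1 : Matrix (Fin k) (Fin k) ℝ) - Vᵀ * normPartition f * (normPartition f)ᵀ * V).PosSemidef := by
  set P := normPartition f with hP
  have hPtP : Pᵀ * P = 1 := PtP f hf
  have hfact : (1 : Matrix (Fin k) (Fin k) ℝ) - Vᵀ * P * Pᵀ * V
      = ((1 - P * Pᵀ) * V)ᴴ * ((1 - P * Pᵀ) * V) := by
    rw [Matrix.conjTranspose_eq_transpose_of_trivial, Matrix.transpose_mul,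
      Matrix.transpose_sub, Matrix.transpose_one, Matrix.transpose_mul,
      Matrix.transpose_transpose]
    have expand : ((1 : Matrix (Fin n) (Fin n) ℝ) - P * Pᵀ) * (1 - P * Pᵀ) = 1 - P * Pᵀ := by
      rw [Matrix.sub_mul, Matrix.mul_sub, Matrix.mul_sub, Matrix.one_mul, Matrix.mul_one,
        show P * Pᵀ * (P * Pᵀ) = P * Pᵀ by
          rw [Matrix.mul_assoc, ← Matrix.mul_assoc Pᵀ, hPtP, Matrix.one_mul]]
      simp only [Matrix.one_mul, Matrix.mul_one]
      abel
    calc (1 : Matrix (Fin k) (Fin k) ℝ) - Vᵀ * P * Pᵀ * V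
        = Vᵀ * ((1 - P * Pᵀ) * V) := by
          rw [Matrix.sub_mul, Matrix.one_mul, Matrix.mul_sub, hV]
          simp only [Matrix.mul_assoc]
      _ = Vᵀ * (((1 - P * Pᵀ) * (1 - P * Pᵀ)) * V) := by rw [expand]
      _ = Vᵀ * (1 - P * Pᵀ) * ((1 - P * Pᵀ) * V) := by simp only [Matrix.mul_assoc]
  rw [hfact]
  exact Matrix.posSemidef_conjTranspose_mul_self _

/-- Let V ∈ ℝ^{n×k} have orthonormal columns, let {C_1,…,C_{k'}} be a
partition of {1,…,n} into nonempty clusters (induced by a surjective map f), with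
normalized partition matrix P, and let Cost(P) be the k-means cost of the partition
with respect to the rows of V.  Then Tr(I_k − Vᵀ P Pᵀ V) = Cost(P); equivalently the
nuclear norm of the (positive semidefinite) matrix I_k − Vᵀ P Pᵀ V equals Cost(P). -/
theorem stmt_8 {n k k' : ℕ} (V : Matrix (Fin n) (Fin k) ℝ) (hV : Vᵀ * V = 1)
    (f : Fin n → Fin k') (hf : Function.Surjective f)
    (P : Matrix (Fin n) (Fin k') ℝ) (hP : P = normPartition f) :
    Matrix.trace ((1 : Matrix (Fin k) (Fin k) ℝ) - Vᵀ * P * Pᵀ * V) = kmeansCost V f ∧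
    nuclearNorm ((1 : Matrix (Fin k) (Fin k) ℝ) - Vᵀ * P * Pᵀ * V) = kmeansCost V f := by
  subst hP
  have htr := traceId V hV f hf
  refine ⟨htr, ?_⟩
  rw [nuclearNorm_eq_trace_of_posSemidef _ (posSemidef_M V hV f hf), htr]
  rfl
end

section
/- Let L ∈ ℝ^{n×n} be symmetric positive semidefinite, let V ∈ ℝ^{n×k}, let P ∈ ℝ^{n×k} satisfy Pᵀ P = I_k, and let 0 ≤ ε < 1. Suppose that for every y in the column space C of V, ‖y − P Pᵀ y‖_L ≤ ε ‖y‖_L. Then for every y ∈ C there exists x ∈ ℝ^k (namely x = Pᵀ y) such that |yᵀ L y − xᵀ (Pᵀ L P) x| ≤ 3ε ‖y‖_L². -/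
open Matrix

/-- The L-seminorm ‖y‖_L = √(yᵀ L y) of a vector, for L symmetric PSD. -/
noncomputable def Lnorm {n : ℕ} (L : Matrix (Fin n) (Fin n) ℝ) (y : Fin n → ℝ) : ℝ :=
  Real.sqrt (y ⬝ᵥ (L *ᵥ y))

variable {n : ℕ} {L : Matrix (Fin n) (Fin n) ℝ}

lemma S_symm (hL : L.PosSemidef) (y z : Fin n → ℝ) : y ⬝ᵥ (L *ᵥ z) = z ⬝ᵥ (L *ᵥ y) := by
  rw [dotProduct_mulVec, ← mulVec_transpose, dotProduct_comm]
  congr 1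
  rw [← conjTranspose_eq_transpose_of_trivial, hL.1.eq]

lemma S_expand (hL : L.PosSemidef) (y z : Fin n → ℝ) (t : ℝ) :
    (y + t • z) ⬝ᵥ (L *ᵥ (y + t • z)) =
      (z ⬝ᵥ (L *ᵥ z)) * (t * t) + (2 * (y ⬝ᵥ (L *ᵥ z))) * t + y ⬝ᵥ (L *ᵥ y) := by
  simp [mulVec_add, mulVec_smul, dotProduct_add, add_dotProduct, smul_dotProduct,
    dotProduct_smul, S_symm hL z y]
  ring

lemma S_cauchy (hL : L.PosSemidef) (y z : Fin n → ℝ) :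
    (y ⬝ᵥ (L *ᵥ z))^2 ≤ (y ⬝ᵥ (L *ᵥ y)) * (z ⬝ᵥ (L *ᵥ z)) := by
  have h := discrim_le_zero (a := z ⬝ᵥ (L *ᵥ z)) (b := 2 * (y ⬝ᵥ (L *ᵥ z)))
    (c := y ⬝ᵥ (L *ᵥ y)) (fun t => by rw [← S_expand hL y z t]; exact hL.dotProduct_mulVec_nonneg _)
  rw [discrim] at h
  nlinarith


/-- Let L ∈ ℝ^{n×n} be symmetric PSD, V ∈ ℝ^{n×k}, P ∈ ℝ^{n×k} with
Pᵀ P = I_k, and 0 ≤ ε < 1.  If ‖y − P Pᵀ y‖_L ≤ ε ‖y‖_L for all y in the column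
space of V, then for every such y there is x ∈ ℝ^k (namely x = Pᵀ y) with
|yᵀ L y − xᵀ (Pᵀ L P) x| ≤ 3 ε ‖y‖_L². -/
theorem stmt_11 {n k : ℕ} (L : Matrix (Fin n) (Fin n) ℝ) (hL : L.PosSemidef)
    (V : Matrix (Fin n) (Fin k) ℝ) (P : Matrix (Fin n) (Fin k) ℝ) (hP : Pᵀ * P = 1)
    (ε : ℝ) (hε0 : 0 ≤ ε) (hε1 : ε < 1)
    (happrox : ∀ y : Fin n → ℝ, (∃ z : Fin k → ℝ, y = V *ᵥ z) →
      Lnorm L (y - P *ᵥ (Pᵀ *ᵥ y)) ≤ ε * Lnorm L y) :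
    ∀ y : Fin n → ℝ, (∃ z : Fin k → ℝ, y = V *ᵥ z) →
      ∃ x : Fin k → ℝ, x = Pᵀ *ᵥ y ∧
        |y ⬝ᵥ (L *ᵥ y) - x ⬝ᵥ ((Pᵀ * L * P) *ᵥ x)| ≤ 3 * ε * (y ⬝ᵥ (L *ᵥ y)) := by
  intro y hy
  refine ⟨Pᵀ *ᵥ y, rfl, ?_⟩
  set x : Fin k → ℝ := Pᵀ *ᵥ y with hx
  set w : Fin n → ℝ := P *ᵥ x with hwdef
  set q : Fin n → ℝ := y - w with hqdef
  have hw : w = y - q := by simp [hqdef]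
  have hxLx : x ⬝ᵥ ((Pᵀ * L * P) *ᵥ x) = w ⬝ᵥ (L *ᵥ w) := by
    rw [← mulVec_mulVec, ← mulVec_mulVec, dotProduct_mulVec x Pᵀ, vecMul_transpose]
  rw [hxLx]
  set A := y ⬝ᵥ (L *ᵥ y) with hAdef
  set W := w ⬝ᵥ (L *ᵥ w) with hWdef
  set Q := q ⬝ᵥ (L *ᵥ q) with hQdef
  set C1 := q ⬝ᵥ (L *ᵥ y) with hC1def
  set C2 := w ⬝ᵥ (L *ᵥ q) with hC2def
  have hA : 0 ≤ A := hL.dotProduct_mulVec_nonneg y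
  have hW : 0 ≤ W := hL.dotProduct_mulVec_nonneg w
  have hQ : 0 ≤ Q := hL.dotProduct_mulVec_nonneg q
  have hsq : Real.sqrt Q ≤ ε * Real.sqrt A := happrox y hy
  have hQle : Q ≤ ε^2 * A := by
    have h1 : Real.sqrt Q ^ 2 ≤ (ε * Real.sqrt A)^2 :=
      pow_le_pow_left₀ (Real.sqrt_nonneg _) hsq 2
    rw [Real.sq_sqrt hQ] at h1
    nlinarith [Real.sq_sqrt hA]
  -- expansion identities
  have hsy : y ⬝ᵥ (L *ᵥ q) = C1 := S_symm hL y q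
  have hWexp : W = A - 2*C1 + Q := by
    rw [hWdef, hAdef, hQdef, hC1def, hw]
    simp only [mulVec_sub, sub_dotProduct, dotProduct_sub, S_symm hL y q]
    ring
  have hC2exp : C2 = C1 - Q := by
    rw [hC2def, hw]
    simp only [sub_dotProduct]
    rw [hsy, hQdef]
  have hC1b : |C1| ≤ ε * A := by
    refine abs_le_of_sq_le_sq ?_ (by positivity)
    have hc : C1^2 ≤ Q * A := S_cauchy hL q y
    nlinarith
  have hC2b : |C2| ≤ 2 * ε * A := by
    refine abs_le_of_sq_le_sq ?_ (by positivity)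
    have hc : C2^2 ≤ W * Q := S_cauchy hL w q
    have hWle : W ≤ (1+ε)^2 * A := by nlinarith [abs_le.1 hC1b]
    have h2 : W * Q ≤ (1+ε)^2*A*(ε^2*A) := mul_le_mul hWle hQle hQ (by positivity)
    have h3 : (1+ε)^2*A*(ε^2*A) ≤ (2*ε*A)^2 := by
      nlinarith [mul_nonneg (mul_nonneg (sub_nonneg.2 hε1.le) (by linarith : (0:ℝ) ≤ 3+ε))
        (mul_nonneg (mul_nonneg hε0 hε0) (mul_nonneg hA hA))]
    linarith
  have key : A - W = C1 + C2 := by rw [hWexp, hC2exp]; ring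
  rw [key]
  calc |C1 + C2| ≤ |C1| + |C2| := abs_add_le _ _
    _ ≤ ε * A + 2 * ε * A := add_le_add hC1b hC2b
    _ = 3 * ε * A := by ring
end

section
/- Let L ∈ ℝ^{n×n} be symmetric positive semidefinite, let V ∈ ℝ^{n×k} satisfy Vᵀ V = I_k, let P ∈ ℝ^{n×k}, and let 0 ≤ ε < 1. Suppose that for every y in the column space of P, ‖y − V Vᵀ y‖_L ≤ ε ‖y‖_L. Then for every x ∈ ℝ^k there exists y in the column space C of V (namely y = V Vᵀ P x) such that |yᵀ L y − xᵀ (Pᵀ L P) x| ≤ 3ε ‖P x‖_L². -/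
open Matrix

lemma sym_bilin {n : ℕ} {L : Matrix (Fin n) (Fin n) ℝ} (hL : L.PosSemidef)
    (a b : Fin n → ℝ) : a ⬝ᵥ (L *ᵥ b) = b ⬝ᵥ (L *ᵥ a) := by
  have h : Lᵀ = L := by
    have := hL.isHermitian.eq
    simpa [Matrix.conjTranspose_eq_transpose_of_trivial] using this
  rw [Matrix.dotProduct_mulVec, ← Matrix.vecMul_transpose, h, dotProduct_comm]

lemma cs_psd {n : ℕ} {L : Matrix (Fin n) (Fin n) ℝ} (hL : L.PosSemidef)
    (a b : Fin n → ℝ) :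
    (a ⬝ᵥ (L *ᵥ b))^2 ≤ (a ⬝ᵥ (L *ᵥ a)) * (b ⬝ᵥ (L *ᵥ b)) := by
  have key : ∀ t : ℝ, 0 ≤ (b ⬝ᵥ (L *ᵥ b)) * (t * t) + (2 * (a ⬝ᵥ (L *ᵥ b))) * t
      + (a ⬝ᵥ (L *ᵥ a)) := by
    intro t
    have h0 : 0 ≤ (a + t • b) ⬝ᵥ (L *ᵥ (a + t • b)) := by
      simpa only [star_trivial] using hL.dotProduct_mulVec_nonneg (a + t • b)
    have hexp : (a + t • b) ⬝ᵥ (L *ᵥ (a + t • b)) =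
        (b ⬝ᵥ (L *ᵥ b)) * (t * t) + (2 * (a ⬝ᵥ (L *ᵥ b))) * t + (a ⬝ᵥ (L *ᵥ a)) := by
      rw [Matrix.mulVec_add, dotProduct_add, add_dotProduct,
        add_dotProduct, Matrix.mulVec_smul, dotProduct_smul,
        smul_dotProduct, smul_dotProduct, dotProduct_smul,
        sym_bilin hL b a]
      ring_nf
    simpa [hexp] using h0
  have hd := discrim_le_zero key
  unfold discrim at hd
  nlinarith [hd]

lemma sub_quad {n : ℕ} {L : Matrix (Fin n) (Fin n) ℝ} (hL : L.PosSemidef)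
    (u d : Fin n → ℝ) :
    (u - d) ⬝ᵥ (L *ᵥ (u - d)) = u ⬝ᵥ (L *ᵥ u) - 2 * (u ⬝ᵥ (L *ᵥ d)) + d ⬝ᵥ (L *ᵥ d) := by
  rw [Matrix.mulVec_sub, dotProduct_sub, sub_dotProduct,
    sub_dotProduct, sym_bilin hL d u]
  ring

/-- Let L ∈ ℝ^{n×n} be symmetric PSD, V ∈ ℝ^{n×k} with Vᵀ V = I_k,
P ∈ ℝ^{n×k}, and 0 ≤ ε < 1.  If ‖y − V Vᵀ y‖_L ≤ ε ‖y‖_L for all y in the column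
space of P, then for every x ∈ ℝ^k there is y in the column space of V
(namely y = V Vᵀ P x) such that |yᵀ L y − xᵀ (Pᵀ L P) x| ≤ 3 ε ‖P x‖_L². -/
theorem stmt_13 {n k : ℕ} (L : Matrix (Fin n) (Fin n) ℝ) (hL : L.PosSemidef)
    (V : Matrix (Fin n) (Fin k) ℝ) (hV : Vᵀ * V = 1) (P : Matrix (Fin n) (Fin k) ℝ)
    (ε : ℝ) (hε0 : 0 ≤ ε) (hε1 : ε < 1)
    (happrox : ∀ y : Fin n → ℝ, (∃ x : Fin k → ℝ, y = P *ᵥ x) →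
      Lnorm L (y - V *ᵥ (Vᵀ *ᵥ y)) ≤ ε * Lnorm L y) :
    ∀ x : Fin k → ℝ,
      ∃ y : Fin n → ℝ, (∃ z : Fin k → ℝ, y = V *ᵥ z) ∧ y = V *ᵥ (Vᵀ *ᵥ (P *ᵥ x)) ∧
        |y ⬝ᵥ (L *ᵥ y) - x ⬝ᵥ ((Pᵀ * L * P) *ᵥ x)| ≤
          3 * ε * ((P *ᵥ x) ⬝ᵥ (L *ᵥ (P *ᵥ x))) := by
  intro x
  set u := P *ᵥ x with hu
  set w := V *ᵥ (Vᵀ *ᵥ u) with hw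
  refine ⟨w, ⟨Vᵀ *ᵥ u, rfl⟩, rfl, ?_⟩
  set d := u - w with hd
  -- quadratic forms
  have huu : 0 ≤ u ⬝ᵥ (L *ᵥ u) := by simpa only [star_trivial] using hL.dotProduct_mulVec_nonneg u
  have hdd : 0 ≤ d ⬝ᵥ (L *ᵥ d) := by simpa only [star_trivial] using hL.dotProduct_mulVec_nonneg d
  -- xᵀ(PᵀLP)x = uᵀLu
  have hq : x ⬝ᵥ ((Pᵀ * L * P) *ᵥ x) = u ⬝ᵥ (L *ᵥ u) := by
    rw [← Matrix.mulVec_mulVec, ← Matrix.mulVec_mulVec, Matrix.dotProduct_mulVec,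
      Matrix.vecMul_transpose]
  -- bound on d from happrox
  have happ := happrox u ⟨x, rfl⟩
  have hdd_le : d ⬝ᵥ (L *ᵥ d) ≤ ε^2 * (u ⬝ᵥ (L *ᵥ u)) := by
    have h1 : Lnorm L d ≤ ε * Lnorm L u := happ
    have h2 : (Lnorm L d)^2 ≤ (ε * Lnorm L u)^2 := by
      have : 0 ≤ Lnorm L d := Real.sqrt_nonneg _
      nlinarith
    have e1 : (Lnorm L d)^2 = d ⬝ᵥ (L *ᵥ d) := Real.sq_sqrt hdd
    have e2 : (Lnorm L u)^2 = u ⬝ᵥ (L *ᵥ u) := Real.sq_sqrt huu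
    calc d ⬝ᵥ (L *ᵥ d) = (Lnorm L d)^2 := e1.symm
      _ ≤ (ε * Lnorm L u)^2 := h2
      _ = ε^2 * (u ⬝ᵥ (L *ᵥ u)) := by rw [mul_pow, e2]
  -- Cauchy-Schwarz bound
  have hcs : (u ⬝ᵥ (L *ᵥ d))^2 ≤ (u ⬝ᵥ (L *ᵥ u)) * (d ⬝ᵥ (L *ᵥ d)) := cs_psd hL u d
  have hud : |u ⬝ᵥ (L *ᵥ d)| ≤ ε * (u ⬝ᵥ (L *ᵥ u)) := by
    have h3 : (u ⬝ᵥ (L *ᵥ d))^2 ≤ (ε * (u ⬝ᵥ (L *ᵥ u)))^2 := by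
      calc (u ⬝ᵥ (L *ᵥ d))^2 ≤ (u ⬝ᵥ (L *ᵥ u)) * (d ⬝ᵥ (L *ᵥ d)) := hcs
        _ ≤ (u ⬝ᵥ (L *ᵥ u)) * (ε^2 * (u ⬝ᵥ (L *ᵥ u))) := by nlinarith
        _ = (ε * (u ⬝ᵥ (L *ᵥ u)))^2 := by ring
    have hb : (0:ℝ) ≤ ε * (u ⬝ᵥ (L *ᵥ u)) := by positivity
    obtain ⟨h4, h5⟩ := abs_le_of_sq_le_sq' h3 hb
    rw [abs_le]; exact ⟨h4, h5⟩
  -- expand wᵀLw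
  have hwexp : w ⬝ᵥ (L *ᵥ w) = u ⬝ᵥ (L *ᵥ u) - 2 * (u ⬝ᵥ (L *ᵥ d)) + d ⬝ᵥ (L *ᵥ d) := by
    have hwd : w = u - d := by rw [hd]; ring
    rw [hwd, sub_quad hL u d]
  rw [hq, hwexp]
  have hε2 : ε^2 ≤ ε := by nlinarith
  rw [abs_le] at *
  constructor <;> nlinarith [hud.1, hud.2]
end

section
/- Let P̂ ∈ {0,1}^{n×k} be a partition matrix of a partition of {1, …, n} into nonempty clusters, C = diag(|C_1|, …, |C_k|), and P = P̂ C^{-1/2} the normalized partition matrix. Let A ∈ ℝ^{n×n} be symmetric with nonnegative entries, D the diagonal degree matrix with D_ii = Σ_j A_ij, Ã = A + I, D̃ = D + I, A_P̂ = P̂ᵀ A P̂, and D_P̂ = P̂ᵀ D P̂. Then the coarse graph convolution operator satisfies (D_P̂ + C)^{-1/2} (A_P̂ + C) (D_P̂ + C)^{-1/2} = (Pᵀ D̃ P)^{-1/2} (Pᵀ Ã P) (Pᵀ D̃ P)^{-1/2}, where the inverse square roots are well-defined because D_P̂ + C and Pᵀ D̃ P are diagonal matrices with positive diagonal entries. 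-/
open Matrix

/-- The inverse square root of a diagonal matrix with positive diagonal entries:
the diagonal matrix with entries 1/√(M j j). -/
noncomputable def invSqrtDiag {k : ℕ} (M : Matrix (Fin k) (Fin k) ℝ) :
    Matrix (Fin k) (Fin k) ℝ :=
  Matrix.diagonal (fun j => 1 / Real.sqrt (M j j))

/-- Let P̂ be the partition matrix of a partition of {1,…,n} into k
nonempty clusters (encoded by a surjective map f), C = diag(|C_1|,…,|C_k|), and
P = P̂ C^{-1/2} the normalized partition matrix.  Let A be symmetric with
nonnegative entries, D the degree matrix, Ã = A + I, D̃ = D + I, A_P̂ = P̂ᵀ A P̂ and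
D_P̂ = P̂ᵀ D P̂.  Then the coarse graph convolution operator satisfies
(D_P̂ + C)^{-1/2} (A_P̂ + C) (D_P̂ + C)^{-1/2}
  = (Pᵀ D̃ P)^{-1/2} (Pᵀ Ã P) (Pᵀ D̃ P)^{-1/2},
where the inverse square roots are well-defined because D_P̂ + C and Pᵀ D̃ P are
diagonal matrices with positive diagonal entries. -/
theorem stmt_15 {n k : ℕ} (f : Fin n → Fin k) (hf : Function.Surjective f)
    (Phat : Matrix (Fin n) (Fin k) ℝ)
    (hPhat : ∀ i j, Phat i j = if f i = j then 1 else 0)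
    (c : Fin k → ℕ) (hc : ∀ j, c j = (Finset.univ.filter (fun i => f i = j)).card)
    (P : Matrix (Fin n) (Fin k) ℝ)
    (hP : P = Phat * Matrix.diagonal (fun j => 1 / Real.sqrt (c j)))
    (A : Matrix (Fin n) (Fin n) ℝ) (hA_symm : Aᵀ = A) (hA_nonneg : ∀ i j, 0 ≤ A i j)
    (D : Matrix (Fin n) (Fin n) ℝ) (hD : D = Matrix.diagonal (fun i => ∑ j, A i j)) :
    invSqrtDiag (Phatᵀ * D * Phat + Matrix.diagonal (fun j => (c j : ℝ))) *
        (Phatᵀ * A * Phat + Matrix.diagonal (fun j => (c j : ℝ))) *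
        invSqrtDiag (Phatᵀ * D * Phat + Matrix.diagonal (fun j => (c j : ℝ))) =
      invSqrtDiag (Pᵀ * (D + 1) * P) * (Pᵀ * (A + 1) * P) *
        invSqrtDiag (Pᵀ * (D + 1) * P) := by

  set s : Fin k → ℝ := fun j => 1 / Real.sqrt (c j) with hs
  have hcpos : ∀ j, 0 < (c j : ℝ) := by
    intro j
    have h0 : 0 < c j := by
      rcases hf j with ⟨i, hi⟩
      rw [hc]
      exact Finset.card_pos.mpr ⟨i, by simp [hi]⟩
    exact_mod_cast h0
  have hspos : ∀ j, 0 < s j := by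
    intro j
    have : 0 < Real.sqrt (c j) := Real.sqrt_pos.mpr (hcpos j)
    simpa [hs] using one_div_pos.mpr this
  have hPP : Phatᵀ * Phat = Matrix.diagonal (fun j => (c j : ℝ)) := by
    ext j j'
    simp only [Matrix.mul_apply, Matrix.transpose_apply, hPhat, Matrix.diagonal_apply]
    by_cases h : j = j'
    · subst h
      simp only [if_pos rfl, hc]
      rw [Finset.card_filter]
      push_cast
      apply Finset.sum_congr rfl
      intro i _
      by_cases hfi : f i = j <;> simp [hfi]
    · rw [if_neg h]
      apply Finset.sum_eq_zero
      intro i _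
      by_cases h1 : f i = j
      · by_cases h2 : f i = j'
        · exact absurd (h1.symm.trans h2) h
        · simp [h2]
      · simp [h1]
  set Cd : Matrix (Fin k) (Fin k) ℝ := Matrix.diagonal (fun j => (c j : ℝ)) with hCd
  have key : ∀ X : Matrix (Fin n) (Fin n) ℝ, Pᵀ * (X + 1) * P =
      Matrix.diagonal s * (Phatᵀ * X * Phat + Cd) * Matrix.diagonal s := by
    intro X
    calc Pᵀ * (X + 1) * P
        = Matrix.diagonal s * Phatᵀ * (X + 1) * (Phat * Matrix.diagonal s) := by
          rw [hP, Matrix.transpose_mul, Matrix.diagonal_transpose]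
      _ = Matrix.diagonal s * (Phatᵀ * X * Phat + Phatᵀ * Phat) * Matrix.diagonal s := by
          simp only [Matrix.mul_add, Matrix.add_mul, Matrix.one_mul, Matrix.mul_assoc]
      _ = Matrix.diagonal s * (Phatᵀ * X * Phat + Cd) * Matrix.diagonal s := by
          rw [hPP]
  have entry : ∀ (M : Matrix (Fin k) (Fin k) ℝ) (j : Fin k),
      (Matrix.diagonal s * M * Matrix.diagonal s) j j = s j * M j j * s j := by
    intro M j
    simp [Matrix.mul_apply, Matrix.diagonal_apply, Finset.mul_sum, Finset.sum_mul]
  have invSqrt_conj : ∀ M : Matrix (Fin k) (Fin k) ℝ,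
      invSqrtDiag (Matrix.diagonal s * M * Matrix.diagonal s) =
        Matrix.diagonal (fun j => 1 / (s j * Real.sqrt (M j j))) := by
    intro M
    unfold invSqrtDiag
    refine congrArg Matrix.diagonal (funext fun j => ?_)
    rw [entry M j, show s j * M j j * s j = s j ^ 2 * M j j by ring,
      Real.sqrt_mul (sq_nonneg _), Real.sqrt_sq (hspos j).le]
  have gs : ∀ (x : ℝ) (j : Fin k), 1 / (s j * x) * s j = 1 / x := by
    intro x j
    rw [div_mul_eq_mul_div, one_mul,
      show s j / (s j * x) = (s j * 1) / (s j * x) by rw [mul_one]]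
    exact mul_div_mul_left 1 x (hspos j).ne'
  set M := Phatᵀ * D * Phat + Cd with hM
  set N := Phatᵀ * A * Phat + Cd with hN
  rw [key D, key A, invSqrt_conj M]
  set g : Fin k → ℝ := fun j => 1 / (s j * Real.sqrt (M j j)) with hg
  have reassoc : Matrix.diagonal g * (Matrix.diagonal s * N * Matrix.diagonal s) *
      Matrix.diagonal g = (Matrix.diagonal g * Matrix.diagonal s) * N *
      (Matrix.diagonal s * Matrix.diagonal g) := by
        simp only [Matrix.mul_assoc]
  rw [reassoc, Matrix.diagonal_mul_diagonal, Matrix.diagonal_mul_diagonal]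
  have h1 : (fun j => g j * s j) = fun j => 1 / Real.sqrt (M j j) := by
    funext j; exact gs _ j
  have h2 : (fun j => s j * g j) = fun j => 1 / Real.sqrt (M j j) := by
    funext j; rw [mul_comm]; exact gs _ j
  rw [h1, h2]
  rfl
end
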